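/- arXiv:2204.01143 — 4 statements merged into one kernel-verified Lean document; each statement's English description precedes it below -/
import Mathlib

section
/- For every natural number N ≥ 1, the natural logarithm ln(N) is a primitive-recursively computable real number: there exists a primitive recursive function A : ℕ → ℚ such that for all x ∈ ℕ, |A(x) − ln(N)| ≤ 1/(x+1). -/
/-- A real number is primitive-recursively computable if some primitive recursive
sequence of rationals approximates it with error at most `1/(x+1)`. -/
def IsPrimrecReal (a : ℝ) : Prop :=
  ∃ A : ℕ → ℚ, Primrec A ∧ ∀ x : ℕ, |(A x : ℝ) - a| ≤ 1 / ((x : ℝ) + 1)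

namespace PrimrecLog
open Primrec Encodable



/-! ### gcd is primrec -/

theorem dvd_primrec : PrimrecRel ((· ∣ ·) : ℕ → ℕ → Prop) := by
  have h : PrimrecRel (fun a b : ℕ => b % a = 0) :=
    Primrec.eq.comp (Primrec.nat_mod.comp Primrec.snd Primrec.fst) (Primrec.const 0)
  exact h.of_eq fun a b =>
    ⟨fun h => Nat.dvd_of_mod_eq_zero h, fun h => Nat.mod_eq_zero_of_dvd h⟩

theorem gcd_eq_findGreatest (a b : ℕ) :
    Nat.gcd a b = Nat.findGreatest (fun k => k ∣ a ∧ k ∣ b) (a + b) := by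
  rcases Nat.eq_zero_or_pos (a + b) with h | h
  · obtain ⟨ha, hb⟩ : a = 0 ∧ b = 0 := by omega
    subst ha; subst hb; simp
  · have hgle : Nat.gcd a b ≤ a + b := by
      rcases Nat.eq_zero_or_pos a with ha | ha
      · subst ha; simp
      · have := Nat.gcd_le_left (n := b) ha; omega
    have hgpos : 0 < Nat.gcd a b := by
      rcases Nat.eq_zero_or_pos a with ha | ha
      · subst ha; simpa using by omega
      · exact Nat.gcd_pos_of_pos_left b ha
    apply le_antisymm
    · exact Nat.le_findGreatest hgle ⟨Nat.gcd_dvd_left a b, Nat.gcd_dvd_right a b⟩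
    · rcases Nat.eq_zero_or_pos (Nat.findGreatest (fun k => k ∣ a ∧ k ∣ b) (a + b)) with h0 | h0
      · omega
      · have hspec : (fun k => k ∣ a ∧ k ∣ b) (Nat.findGreatest (fun k => k ∣ a ∧ k ∣ b) (a + b)) :=
          Nat.findGreatest_spec (P := fun k => k ∣ a ∧ k ∣ b) hgle ⟨Nat.gcd_dvd_left a b, Nat.gcd_dvd_right a b⟩
        exact Nat.le_of_dvd hgpos (Nat.dvd_gcd hspec.1 hspec.2)

theorem gcd_primrec : Primrec₂ Nat.gcd := by
  have hp : PrimrecRel (fun (p : ℕ × ℕ) (k : ℕ) => k ∣ p.1 ∧ k ∣ p.2) :=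
    PrimrecPred.and
      (dvd_primrec.comp Primrec.snd (Primrec.fst.comp Primrec.fst))
      (dvd_primrec.comp Primrec.snd (Primrec.snd.comp Primrec.fst))
  have h : Primrec fun p : ℕ × ℕ => Nat.findGreatest (fun k => k ∣ p.1 ∧ k ∣ p.2) (p.1 + p.2) :=
    Primrec.nat_findGreatest (Primrec.nat_add.comp Primrec.fst Primrec.snd) hp
  exact h.of_eq fun p => (gcd_eq_findGreatest p.1 p.2).symm

attribute [local instance] Encodable.decidableRangeEncode

/-- encode of a nonneg integer -/
theorem encode_int_ofNat (n : ℕ) : Encodable.encode (n : ℤ) = 2 * n := rfl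

theorem encode_int_negSucc (n : ℕ) : Encodable.encode (Int.negSucc n) = 2 * n + 1 := rfl

theorem natAbs_ofNat_int (u : ℕ) : (Denumerable.ofNat ℤ u).natAbs = (u + 1) / 2 := by
  have h : Encodable.encode (Denumerable.ofNat ℤ u) = u := Denumerable.encode_ofNat u
  rcases hz : Denumerable.ofNat ℤ u with n | n
  · rw [hz] at h
    have : 2 * n = u := by rw [← h]; rfl
    simp [Int.natAbs]; omega
  · rw [hz] at h
    have : 2 * n + 1 = u := by rw [← h]; rfl
    simp [Int.natAbs]; omega

/-- the predicate: `m` is in the range of the (old) rational encoding -/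
def predE (m : ℕ) : Prop :=
  m.unpair.2 ≠ 0 ∧ Nat.gcd ((m.unpair.1 + 1) / 2) m.unpair.2 = 1

instance : DecidablePred predE := fun m => by unfold predE; infer_instance

theorem encode_old_rat (q : ℚ) :
    @Encodable.encode ℚ Rat.instEncodable q = Nat.pair (Encodable.encode q.num) q.den := rfl

theorem mem_range_iff_predE (m : ℕ) :
    m ∈ Set.range (@Encodable.encode ℚ Rat.instEncodable) ↔ predE m := by
  constructor
  · rintro ⟨q, rfl⟩
    rw [encode_old_rat]
    constructor
    · rw [Nat.unpair_pair]; exact q.den_nz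
    · rw [Nat.unpair_pair]
      simp only []
      have h1 : (Encodable.encode q.num + 1) / 2 = q.num.natAbs := by
        have : q.num = Denumerable.ofNat ℤ (Encodable.encode q.num) :=
          (Denumerable.ofNat_encode q.num).symm
        rw [← natAbs_ofNat_int, ← this]
      rw [h1]
      exact q.reduced
  · rintro ⟨h1, h2⟩
    refine ⟨Rat.mk' (Denumerable.ofNat ℤ m.unpair.1) m.unpair.2 h1 ?_, ?_⟩
    · rw [Nat.Coprime, natAbs_ofNat_int]; exact h2
    · rw [encode_old_rat]
      show Nat.pair (Encodable.encode (Denumerable.ofNat ℤ m.unpair.1)) m.unpair.2 = m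
      rw [Denumerable.encode_ofNat, Nat.pair_unpair]

/-- counting function -/
def cnt (k : ℕ) : ℕ := Nat.rec 0 (fun m ih => ih + (bif decide (predE m) then 1 else 0)) k

theorem cnt_eq_countP (k : ℕ) :
    cnt k = (List.range k).countP (fun m => decide (predE m)) := by
  induction k with
  | zero => rfl
  | succ k ih =>
    rw [List.range_succ, List.countP_append]
    show cnt k + _ = _
    rw [ih]
    simp [List.countP_cons]

/-- THE key computation : encode of a rational in the Primcodable instance -/
theorem encode_rat_eq (q : ℚ) :
    @Encodable.encode ℚ (Primcodable.ofDenumerable ℚ).toEncodable q =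
      cnt (Nat.pair (Encodable.encode q.num) q.den) := by
  have h0 : @Encodable.encode ℚ (Primcodable.ofDenumerable ℚ).toEncodable q =
      (List.range (@Encodable.encode ℚ Rat.instEncodable q)).countP
        (fun m => decide (m ∈ Set.range (@Encodable.encode ℚ Rat.instEncodable))) := rfl
  rw [h0, encode_old_rat, cnt_eq_countP]
  exact List.countP_congr fun m _ => by
    simp only [decide_eq_true_eq]
    exact mem_range_iff_predE m



theorem predE_primrec : PrimrecPred predE := by
  have h1 : Primrec fun m : ℕ => m.unpair.2 :=
    Primrec.snd.comp Primrec.unpair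
  have h2 : Primrec fun m : ℕ => Nat.gcd ((m.unpair.1 + 1) / 2) m.unpair.2 :=
    gcd_primrec.comp
      (Primrec.nat_div.comp (Primrec.succ.comp (Primrec.fst.comp Primrec.unpair))
        (Primrec.const 2)) h1
  exact PrimrecPred.and
    (PrimrecPred.not (Primrec.eq.comp h1 (Primrec.const 0)))
    (Primrec.eq.comp h2 (Primrec.const 1))

theorem cnt_primrec : Primrec cnt := by
  have := Primrec.nat_rec' (f := @id ℕ) (g := fun _ => 0)
    (h := fun (_ : ℕ) (p : ℕ × ℕ) => p.2 + (bif decide (predE p.1) then 1 else 0))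
    Primrec.id (Primrec.const 0)
    (Primrec.nat_add.comp (Primrec.snd.comp Primrec.snd)
      ((Primrec.cond (predE_primrec.decide.comp (Primrec.fst.comp Primrec.snd))
        (Primrec.const 1) (Primrec.const 0))))
  exact this.of_eq fun k => rfl

-- num and den of a nonneg nat fraction
theorem num_nat_div (a b : ℕ) (hb : b ≠ 0) :
    ((a : ℚ) / (b : ℚ)).num = ((a / Nat.gcd a b : ℕ) : ℤ) := by
  rw [show ((a:ℚ)) = (((a:ℤ)):ℚ) by push_cast; ring,
    show ((b:ℚ)) = (((b:ℤ)):ℚ) by push_cast; ring, ← Rat.divInt_eq_div, Rat.num_divInt, Int.gcd_comm]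
  have hs : ((b:ℤ)).sign = 1 := Int.sign_eq_one_of_pos (by exact_mod_cast Nat.pos_of_ne_zero hb)
  rw [hs, one_mul]
  rw [Int.gcd_natCast_natCast]
  exact (Int.natCast_div a (Nat.gcd a b)).symm

theorem den_nat_div (a b : ℕ) (hb : b ≠ 0) :
    ((a : ℚ) / (b : ℚ)).den = b / Nat.gcd a b := by
  rw [show ((a:ℚ)) = (((a:ℤ)):ℚ) by push_cast; ring,
    show ((b:ℚ)) = (((b:ℤ)):ℚ) by push_cast; ring, ← Rat.divInt_eq_div, Rat.den_divInt, Int.gcd_comm]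
  have : ((b:ℤ) = 0) = False := by simp [hb]
  rw [if_neg (by exact_mod_cast hb)]
  simp [Int.gcd_natCast_natCast]



theorem ratDiv_primrec {f g : ℕ → ℕ} (hf : Primrec f) (hg : Primrec g)
    (h : ∀ x, g x ≠ 0) : Primrec (fun x => (f x : ℚ) / (g x : ℚ)) := by
  have hG : Primrec fun x => Nat.gcd (f x) (g x) := gcd_primrec.comp hf hg
  have hE : Primrec fun x =>
      cnt (Nat.pair (2 * (f x / Nat.gcd (f x) (g x))) (g x / Nat.gcd (f x) (g x))) :=
    cnt_primrec.comp (Primrec₂.natPair.comp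
      (Primrec.nat_mul.comp (Primrec.const 2) (Primrec.nat_div.comp hf hG))
      (Primrec.nat_div.comp hg hG))
  refine Primrec.encode_iff.1 (hE.of_eq fun x => ?_)
  rw [encode_rat_eq, num_nat_div _ _ (h x), den_nat_div _ _ (h x), encode_int_ofNat]



theorem factorial_primrec : Primrec Nat.factorial := by
  have := Primrec.nat_rec' (f := @id ℕ) (g := fun _ => 1)
    (h := fun (_ : ℕ) (p : ℕ × ℕ) => (p.1 + 1) * p.2)
    Primrec.id (Primrec.const 1)
    (Primrec.nat_mul.comp (Primrec.succ.comp (Primrec.fst.comp Primrec.snd))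
      (Primrec.snd.comp Primrec.snd))
  refine this.of_eq fun k => ?_
  induction k with
  | zero => rfl
  | succ k ih => simp [Nat.factorial_succ]; rw [← ih]; rfl

theorem pow_primrec : Primrec₂ (· ^ · : ℕ → ℕ → ℕ) := by
  have := Primrec.nat_rec' (f := fun p : ℕ × ℕ => p.2) (g := fun _ => 1)
    (h := fun (p : ℕ × ℕ) (q : ℕ × ℕ) => q.2 * p.1)
    Primrec.snd (Primrec.const 1)
    (Primrec.nat_mul.comp (Primrec.snd.comp Primrec.snd) (Primrec.fst.comp Primrec.fst))
  refine this.of_eq fun p => ?_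
  obtain ⟨a, b⟩ := p
  show Nat.rec 1 (fun _ IH => IH * a) b = a ^ b
  induction b with
  | zero => rfl
  | succ k ih => rw [pow_succ, ← ih]

theorem sum_range_primrec {k : ℕ → ℕ} {g : ℕ → ℕ → ℕ} (hk : Primrec k)
    (hg : Primrec₂ g) : Primrec fun x => ∑ i ∈ Finset.range (k x), g x i := by
  have := Primrec.nat_rec' (f := k) (g := fun _ => 0)
    (h := fun (x : ℕ) (p : ℕ × ℕ) => p.2 + g x p.1)
    hk (Primrec.const 0)
    (Primrec.nat_add.comp (Primrec.snd.comp Primrec.snd)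
      (hg.comp Primrec.fst (Primrec.fst.comp Primrec.snd)))
  refine this.of_eq fun x => ?_
  induction k x with
  | zero => simp
  | succ n ih => rw [Finset.sum_range_succ, ← ih]



-- per-term identity
theorem term_eq (N n i : ℕ) (hN : 1 ≤ N) (hi : i < n) :
    (((N - 1) ^ (i + 1) * N ^ (n - 1 - i) * (n.factorial / (i + 1)) : ℕ) : ℝ) /
        ((N ^ n * n.factorial : ℕ) : ℝ) =
      (((N : ℝ) - 1) / N) ^ (i + 1) / (i + 1) := by
  have hdvd : (i + 1) ∣ n.factorial := Nat.dvd_factorial (Nat.succ_pos i) hi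
  have hNR : (N : ℝ) ≠ 0 := by positivity
  have hcast1 : ((N - 1 : ℕ) : ℝ) = (N : ℝ) - 1 := by
    have := Nat.cast_sub (R := ℝ) hN; simpa using this
  have hfac : ((n.factorial / (i + 1) : ℕ) : ℝ) = (n.factorial : ℝ) / (i + 1) := by
    rw [Nat.cast_div hdvd (by positivity)]; norm_num
  have hpow : (N : ℝ) ^ n = (N : ℝ) ^ (i + 1) * (N : ℝ) ^ (n - 1 - i) := by
    rw [← pow_add]; congr 1; omega
  push_cast [hcast1, hfac]
  rw [hpow, div_pow]
  have h1 : ((i : ℝ) + 1) ≠ 0 := by positivity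
  have h2 : (n.factorial : ℝ) ≠ 0 := by positivity
  field_simp

theorem sum_eq (N n : ℕ) (hN : 1 ≤ N) :
    ((∑ i ∈ Finset.range n, (N - 1) ^ (i + 1) * N ^ (n - 1 - i) * (n.factorial / (i + 1)) : ℕ) : ℝ) /
        ((N ^ n * n.factorial : ℕ) : ℝ) =
      ∑ i ∈ Finset.range n, (((N : ℝ) - 1) / N) ^ (i + 1) / (i + 1) := by
  rw [Nat.cast_sum, Finset.sum_div]
  exact Finset.sum_congr rfl fun i hi => term_eq N n i hN (Finset.mem_range.1 hi)



theorem bernoulli_bound (N m : ℕ) (hN : 2 ≤ N) (hm : 1 ≤ m) :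
    (((N : ℝ) - 1) / N) ^ m ≤ ((N : ℝ) - 1) / m := by
  set t : ℝ := (N : ℝ) - 1 with ht
  have htpos : (1 : ℝ) ≤ t := by
    have : (2 : ℝ) ≤ (N : ℝ) := by exact_mod_cast hN
    simp [ht]; linarith
  have ht0 : t ≠ 0 := by linarith
  have ha : (-2 : ℝ) ≤ 1 / t := by
    have : (0:ℝ) ≤ 1/t := by positivity
    linarith
  have hc : 1 + (m : ℝ) * (1 / t) ≤ (1 + 1 / t) ^ m := one_add_mul_le_pow ha m
  have hmt : (0 : ℝ) < (m : ℝ) / t := by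
    have : (0:ℝ) < (m:ℝ) := by exact_mod_cast hm
    positivity
  have hcm : (m : ℝ) / t ≤ (1 + 1 / t) ^ m := by
    calc (m : ℝ) / t ≤ 1 + (m : ℝ) * (1 / t) := by
          rw [div_eq_mul_one_div]; linarith
      _ ≤ (1 + 1 / t) ^ m := hc
  have hNt : (N : ℝ) = t + 1 := by simp [ht]
  have h11 : 1 + 1/t = (N:ℝ)/t := by rw [hNt]; field_simp
  have hr : t / (N : ℝ) = ((1 + 1/t))⁻¹ := by rw [h11, inv_div]
  rw [show ((N:ℝ) - 1) / N = t / N from rfl, hr, inv_pow]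
  rw [show ((N:ℝ) - 1) / m = t / m from rfl]
  have h2 : ((1 + 1/t) ^ m)⁻¹ ≤ ((m : ℝ)/t)⁻¹ := by
    apply inv_anti₀ hmt hcm
  calc ((1 + 1/t) ^ m)⁻¹ ≤ ((m : ℝ)/t)⁻¹ := h2
    _ = t / m := by rw [inv_div]




theorem approx_bound (N x : ℕ) (hN : 1 ≤ N) :
    |(∑ i ∈ Finset.range (N ^ 2 * (x + 1)), (((N : ℝ) - 1) / N) ^ (i + 1) / (i + 1)) -
        Real.log N| ≤ 1 / ((x : ℝ) + 1) := by
  set n : ℕ := N ^ 2 * (x + 1) with hn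
  set r : ℝ := ((N : ℝ) - 1) / N with hrdef
  have hN1 : (1 : ℝ) ≤ (N : ℝ) := by exact_mod_cast hN
  have hN0 : (N : ℝ) ≠ 0 := by positivity
  have hr0 : 0 ≤ r := by apply div_nonneg <;> linarith
  have hrlt : r < 1 := by
    rw [hrdef, div_lt_one (by linarith)]; linarith
  have habs : |r| = r := abs_of_nonneg hr0
  have key := Real.abs_log_sub_add_sum_range_le (by rw [habs]; exact hrlt) n
  rw [habs] at key
  have h1r : 1 - r = ((N : ℝ))⁻¹ := by
    rw [hrdef]; field_simp; ring
  have hlog : Real.log (1 - r) = - Real.log N := by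
    rw [h1r, Real.log_inv]
  rw [hlog, h1r] at key
  have key2 : |(∑ i ∈ Finset.range n, r ^ (i + 1) / ((i : ℝ) + 1)) - Real.log N| ≤
      r ^ (n + 1) * N := by
    calc _ = |(∑ i ∈ Finset.range n, r ^ (i + 1) / ((i : ℝ) + 1)) + -Real.log N| := by
          rw [sub_eq_add_neg]
      _ ≤ r ^ (n + 1) / ((N : ℝ))⁻¹ := key
      _ = r ^ (n + 1) * N := by field_simp
  refine key2.trans ?_
  have hx1 : (0 : ℝ) < (x : ℝ) + 1 := by positivity
  rcases eq_or_lt_of_le hN with h1 | h2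
  · -- N = 1
    have : r = 0 := by rw [hrdef, ← h1]; norm_num
    rw [this]
    simp [zero_pow]
    positivity
  · have hN2 : 2 ≤ N := h2
    have hb := bernoulli_bound N (n + 1) hN2 (by omega)
    have hnpos : (0 : ℝ) < (n : ℝ) + 1 := by positivity
    calc r ^ (n + 1) * N ≤ (((N : ℝ) - 1) / ((n : ℝ) + 1)) * N := by
          apply mul_le_mul_of_nonneg_right _ (by linarith)
          convert hb using 2
          exacts [rfl, by push_cast; ring]
      _ ≤ 1 / ((x : ℝ) + 1) := by
          rw [div_mul_eq_mul_div, div_le_div_iff₀ hnpos hx1]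
          have hcast : (n : ℝ) = (N : ℝ) ^ 2 * ((x : ℝ) + 1) := by
            rw [hn]; push_cast; ring
          have hN2R : (2 : ℝ) ≤ (N : ℝ) := by exact_mod_cast hN2
          nlinarith [sq_nonneg ((N : ℝ)), hx1]


end PrimrecLog

theorem primrecReal_log_nat (N : ℕ) (hN : 1 ≤ N) :
    IsPrimrecReal (Real.log N) := by
  classical
  open PrimrecLog in
  refine ⟨fun x => ((∑ i ∈ Finset.range (N ^ 2 * (x + 1)),
      (N - 1) ^ (i + 1) * N ^ (N ^ 2 * (x + 1) - 1 - i) *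
        ((N ^ 2 * (x + 1)).factorial / (i + 1)) : ℕ) : ℚ) /
      ((N ^ (N ^ 2 * (x + 1)) * (N ^ 2 * (x + 1)).factorial : ℕ) : ℚ), ?_, ?_⟩
  · have hn : Primrec fun x : ℕ => N ^ 2 * (x + 1) :=
      Primrec.nat_mul.comp (Primrec.const (N ^ 2)) Primrec.succ
    have hterm : Primrec₂ fun (x i : ℕ) =>
        (N - 1) ^ (i + 1) * N ^ (N ^ 2 * (x + 1) - 1 - i) *
          ((N ^ 2 * (x + 1)).factorial / (i + 1)) := by
      have h1 : Primrec fun p : ℕ × ℕ => (N - 1) ^ (p.2 + 1) :=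
        pow_primrec.comp (Primrec.const (N - 1)) (Primrec.succ.comp Primrec.snd)
      have h2 : Primrec fun p : ℕ × ℕ => N ^ (N ^ 2 * (p.1 + 1) - 1 - p.2) :=
        pow_primrec.comp (Primrec.const N)
          (Primrec.nat_sub.comp
            (Primrec.nat_sub.comp (hn.comp Primrec.fst) (Primrec.const 1)) Primrec.snd)
      have h3 : Primrec fun p : ℕ × ℕ => (N ^ 2 * (p.1 + 1)).factorial / (p.2 + 1) :=
        Primrec.nat_div.comp (factorial_primrec.comp (hn.comp Primrec.fst))
          (Primrec.succ.comp Primrec.snd)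
      exact Primrec.nat_mul.comp (Primrec.nat_mul.comp h1 h2) h3
    have hnum : Primrec fun x : ℕ => ∑ i ∈ Finset.range (N ^ 2 * (x + 1)),
        (N - 1) ^ (i + 1) * N ^ (N ^ 2 * (x + 1) - 1 - i) *
          ((N ^ 2 * (x + 1)).factorial / (i + 1)) :=
      sum_range_primrec hn hterm
    have hden : Primrec fun x : ℕ => N ^ (N ^ 2 * (x + 1)) * (N ^ 2 * (x + 1)).factorial :=
      Primrec.nat_mul.comp (pow_primrec.comp (Primrec.const N) hn)
        (factorial_primrec.comp hn)
    exact ratDiv_primrec hnum hden fun x =>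
      Nat.mul_ne_zero (pow_ne_zero _ (by omega)) (Nat.factorial_ne_zero _)
  · intro x
    have hcast : (((((∑ i ∈ Finset.range (N ^ 2 * (x + 1)),
        (N - 1) ^ (i + 1) * N ^ (N ^ 2 * (x + 1) - 1 - i) *
          ((N ^ 2 * (x + 1)).factorial / (i + 1)) : ℕ) : ℚ)) /
        ((N ^ (N ^ 2 * (x + 1)) * (N ^ 2 * (x + 1)).factorial : ℕ) : ℚ) : ℚ) : ℝ) =
        ((∑ i ∈ Finset.range (N ^ 2 * (x + 1)),
        (N - 1) ^ (i + 1) * N ^ (N ^ 2 * (x + 1) - 1 - i) *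
          ((N ^ 2 * (x + 1)).factorial / (i + 1)) : ℕ) : ℝ) /
        ((N ^ (N ^ 2 * (x + 1)) * (N ^ 2 * (x + 1)).factorial : ℕ) : ℝ) := by
      push_cast; ring
    rw [hcast, sum_eq N (N ^ 2 * (x + 1)) hN]
    exact approx_bound N x hN
end

section
/- Liouville's number L = Σ_{n=1}^∞ 10^{−n!} is a primitive-recursively computable real number: there exists a primitive recursive function A : ℕ → ℚ such that for all x ∈ ℕ, |A(x) − L| ≤ 1/(x+1). -/
open Encodable

namespace PrimrecLiouville

/-! ### ℕ-level data -/

def Nfn : ℕ → ℕ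
  | 0 => 1
  | x + 1 => Nfn x * 10 ^ (Nat.factorial (x + 2) - Nat.factorial (x + 1)) + 1

def Dfn (x : ℕ) : ℕ := 10 ^ Nat.factorial (x + 1)

lemma Nfn_mod (x : ℕ) : Nfn x % 10 = 1 := by
  cases x with
  | zero => rfl
  | succ x =>
    show (Nfn x * 10 ^ (Nat.factorial (x + 2) - Nat.factorial (x + 1)) + 1) % 10 = 1
    have h1 : Nat.factorial (x + 1) < Nat.factorial (x + 2) :=
      Nat.factorial_lt (Nat.succ_pos _) |>.2 (by omega)
    have h2 : 1 ≤ Nat.factorial (x + 2) - Nat.factorial (x + 1) := by omega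
    obtain ⟨e, he⟩ := Nat.exists_eq_add_of_le h2
    rw [he, pow_add, pow_one]
    have h3 : Nfn x * (10 * 10 ^ e) = 10 * (Nfn x * 10 ^ e) := by ring
    rw [h3]
    omega

lemma Nfn_coprime (x : ℕ) : Nat.Coprime (Nfn x) (Dfn x) := by
  have h10 : Nat.Coprime (Nfn x) 10 := by
    unfold Nat.Coprime
    rw [Nat.gcd_comm, Nat.gcd_rec, Nfn_mod]
    rfl
  exact h10.pow_right _

lemma Dfn_pos (x : ℕ) : 0 < Dfn x := Nat.pow_pos (by norm_num)

def Q (x : ℕ) : ℚ :=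
  ⟨(Nfn x : ℤ), Dfn x, (Dfn_pos x).ne', by simpa using Nfn_coprime x⟩

lemma Q_num (x : ℕ) : (Q x).num = (Nfn x : ℤ) := rfl
lemma Q_den (x : ℕ) : (Q x).den = Dfn x := rfl

/-! ### encoding of ℚ -/

lemma encode_int_ofNat (n : ℕ) : encode ((n : ℕ) : ℤ) = 2 * n := by
  show Function.uncurry Nat.bit (Sum.elim (Prod.mk false) (Prod.mk true) (Sum.inl n)) = 2 * n
  simp [Function.uncurry, Nat.bit]

lemma encode_int_negSucc (n : ℕ) : encode (Int.negSucc n) = 2 * n + 1 := by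
  show Equiv.intEquivNat (Int.negSucc n) = 2 * n + 1
  simp [Equiv.intEquivNat, Equiv.intEquivNatSumNat, Equiv.natSumNatEquivNat,
    Equiv.boolProdNatEquivNat, Nat.bit]

lemma encode_int_natAbs (z : ℤ) : encode z / 2 + encode z % 2 = z.natAbs := by
  cases z with
  | ofNat n => rw [show ((Int.ofNat n) : ℤ) = ((n : ℕ) : ℤ) from rfl, encode_int_ofNat]; omega
  | negSucc n => rw [encode_int_negSucc]; simp [Int.natAbs]; omega

lemma encode_rat0 (q : ℚ) : @encode ℚ Rat.instEncodable q = Nat.pair (encode q.num) q.den := by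
  obtain ⟨a, b, c, d⟩ := q
  show @encode ℚ (Encodable.ofEquiv _ _) _ = _
  rw [Encodable.encode_ofEquiv]
  show encode (⟨a, (⟨b, Nat.pos_of_ne_zero c, d⟩ : { d : ℕ // 0 < d ∧ a.natAbs.Coprime d })⟩ :
      Σ n : ℤ, { d : ℕ // 0 < d ∧ n.natAbs.Coprime d }) = _
  rw [encode_sigma_val, Subtype.encode_eq]
  rfl

def P (k : ℕ) : Prop :=
  0 < (Nat.unpair k).2 ∧ Nat.Coprime ((Nat.unpair k).1 / 2 + (Nat.unpair k).1 % 2) (Nat.unpair k).2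

instance : DecidablePred P := fun k => by unfold P Nat.Coprime; infer_instance

lemma mem_range_encode_iff (k : ℕ) :
    k ∈ Set.range (@encode ℚ Rat.instEncodable) ↔ P k := by
  constructor
  · rintro ⟨q, rfl⟩
    rw [encode_rat0]
    constructor
    · simpa [Nat.unpair_pair] using q.pos
    · have := encode_int_natAbs q.num
      simpa [Nat.unpair_pair, this] using q.reduced
  · rintro ⟨h1, h2⟩
    set a := (Nat.unpair k).1
    set b := (Nat.unpair k).2
    have hz : encode (Denumerable.ofNat ℤ a) = a := Denumerable.encode_ofNat a
    have habs : (Denumerable.ofNat ℤ a).natAbs = a / 2 + a % 2 := by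
      rw [← encode_int_natAbs (Denumerable.ofNat ℤ a), hz]
    refine ⟨⟨Denumerable.ofNat ℤ a, b, h1.ne', by rw [habs]; exact h2⟩, ?_⟩
    rw [encode_rat0]
    show Nat.pair (encode (Denumerable.ofNat ℤ a)) b = k
    rw [hz, Nat.pair_unpair]

def pB (k : ℕ) : Bool := decide (P k)

/-- The rank formula for the denumerable encoding of `ℚ`. -/
lemma encode_rat_eq (q : ℚ) :
    @encode ℚ (Primcodable.ofDenumerable ℚ).toEncodable q =
      (List.range (Nat.pair (encode q.num) q.den)).foldl
        (fun acc k => acc + cond (pB k) 1 0) 0 := by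
  have h0 : @encode ℚ (Primcodable.ofDenumerable ℚ).toEncodable q =
      (List.range (@encode ℚ Rat.instEncodable q)).countP
        (fun y => @decide (y ∈ Set.range (@encode ℚ Rat.instEncodable))
          (Encodable.decidableRangeEncode ℚ y)) := rfl
  rw [h0, encode_rat0]
  generalize (List.range (Nat.pair (encode q.num) q.den)) = l
  have key : ∀ (l : List ℕ) (acc : ℕ),
      l.foldl (fun acc k => acc + cond (pB k) 1 0) acc =
        acc + l.countP (fun y => @decide (y ∈ Set.range (@encode ℚ Rat.instEncodable))
          (Encodable.decidableRangeEncode ℚ y)) := by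
    intro l
    induction l with
    | nil => simp
    | cons a l ih =>
      intro acc
      rw [List.foldl_cons, ih, List.countP_cons]
      have : pB a = @decide (a ∈ Set.range (@encode ℚ Rat.instEncodable))
          (Encodable.decidableRangeEncode ℚ a) := by
        simp only [pB]
        exact decide_eq_decide.mpr (mem_range_encode_iff a).symm
      cases h : pB a <;> rw [← this, h] <;> simp <;> omega
  rw [key]
  simp


/-! ### Primrec machinery -/

lemma primrec_pow : Primrec₂ ((· ^ ·) : ℕ → ℕ → ℕ) := Primrec₂.unpaired'.mp Nat.Primrec.pow

lemma primrec_factorial : Primrec Nat.factorial := by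
  have h : Primrec₂ (fun (k ih : ℕ) => (k + 1) * ih) :=
    Primrec.nat_mul.comp₂ (Primrec.succ.comp₂ Primrec₂.left) Primrec₂.right
  have := Primrec.nat_rec₁ (α := ℕ) 1 h
  exact this.of_eq (fun n => by induction n with
    | zero => rfl
    | succ n ih => simp [Nat.factorial, ih])

lemma primrec_Nfn : Primrec Nfn := by
  have h : Primrec₂ (fun (k ih : ℕ) =>
      ih * 10 ^ (Nat.factorial (k + 2) - Nat.factorial (k + 1)) + 1) := by
    have hexp : Primrec (fun k : ℕ => 10 ^ (Nat.factorial (k + 2) - Nat.factorial (k + 1))) :=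
      primrec_pow.comp (Primrec.const 10)
        (Primrec.nat_sub.comp
          (primrec_factorial.comp (Primrec.succ.comp Primrec.succ))
          (primrec_factorial.comp Primrec.succ))
    exact Primrec.succ.comp₂
      (Primrec.nat_mul.comp₂ Primrec₂.right (hexp.comp₂ Primrec₂.left))
  have := Primrec.nat_rec₁ (α := ℕ) 1 h
  exact this.of_eq (fun n => by induction n with
    | zero => rfl
    | succ n ih => simpa [Nfn, ih] using rfl)

lemma primrec_Dfn : Primrec Dfn :=
  primrec_pow.comp (Primrec.const 10) (primrec_factorial.comp Primrec.succ)

/-! gcd is primrec -/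

def gcdStep (p : ℕ × ℕ) : ℕ × ℕ := if p.1 = 0 then p else (p.2 % p.1, p.1)

lemma primrec_gcdStep : Primrec gcdStep :=
  Primrec.ite (Primrec.eq.comp Primrec.fst (Primrec.const 0)) Primrec.id
    (Primrec.pair (Primrec.nat_mod.comp Primrec.snd Primrec.fst) Primrec.fst)

lemma gcdStep_iterate : ∀ a : ℕ, ∀ fuel b : ℕ, a ≤ fuel →
    (gcdStep^[fuel] (a, b)).2 = Nat.gcd a b := by
  intro a
  induction a using Nat.strong_induction_on with
  | _ a ih =>
    intro fuel b hle
    cases a with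
    | zero =>
      have : gcdStep (0, b) = (0, b) := by simp [gcdStep]
      rw [Function.iterate_fixed this]
      simp
    | succ a' =>
      cases fuel with
      | zero => omega
      | succ f =>
        rw [Function.iterate_succ_apply]
        have hstep : gcdStep (a' + 1, b) = (b % (a' + 1), a' + 1) := by simp [gcdStep]
        have hlt : b % (a' + 1) < a' + 1 := Nat.mod_lt _ (by omega)
        rw [hstep, ih _ hlt f _ (by omega)]
        exact (Nat.gcd_rec _ _).symm

lemma primrec_gcd : Primrec₂ Nat.gcd := by
  have hIter : Primrec (fun p : ℕ × ℕ => gcdStep^[p.1] p) :=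
    Primrec.nat_iterate Primrec.fst Primrec.id (primrec_gcdStep.comp₂ Primrec₂.right)
  have : Primrec (fun p : ℕ × ℕ => (gcdStep^[p.1] p).2) := Primrec.snd.comp hIter
  exact Primrec₂.mk (this.of_eq (fun p => gcdStep_iterate p.1 p.1 p.2 le_rfl))

lemma primrec_P : PrimrecPred P := by
  have hu1 : Primrec (fun k : ℕ => (Nat.unpair k).1) := Primrec.fst.comp Primrec.unpair
  have hu2 : Primrec (fun k : ℕ => (Nat.unpair k).2) := Primrec.snd.comp Primrec.unpair
  have h1 : PrimrecPred (fun k : ℕ => 0 < (Nat.unpair k).2) :=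
    Primrec.nat_lt.comp (Primrec.const 0) hu2
  have habs : Primrec (fun k : ℕ => (Nat.unpair k).1 / 2 + (Nat.unpair k).1 % 2) :=
    Primrec.nat_add.comp (Primrec.nat_div.comp hu1 (Primrec.const 2))
      (Primrec.nat_mod.comp hu1 (Primrec.const 2))
  have h2 : PrimrecPred (fun k : ℕ =>
      Nat.gcd ((Nat.unpair k).1 / 2 + (Nat.unpair k).1 % 2) (Nat.unpair k).2 = 1) :=
    Primrec.eq.comp (primrec_gcd.comp habs hu2) (Primrec.const 1)
  exact (h1.and h2).of_eq (fun k => Iff.rfl)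

lemma primrec_pB : Primrec pB := primrec_P.decide

def Ffn (x : ℕ) : ℕ :=
  (List.range (Nat.pair (2 * Nfn x) (Dfn x))).foldl (fun acc k => acc + cond (pB k) 1 0) 0

lemma primrec_Ffn : Primrec Ffn := by
  have hlist : Primrec (fun x : ℕ => List.range (Nat.pair (2 * Nfn x) (Dfn x))) :=
    Primrec.list_range.comp (Primrec₂.natPair.comp
      (Primrec.nat_double.comp primrec_Nfn) primrec_Dfn)
  have hstep : Primrec (fun p : ℕ × ℕ => p.1 + cond (pB p.2) 1 0) :=
    Primrec.nat_add.comp Primrec.fst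
      (Primrec.cond (primrec_pB.comp Primrec.snd) (Primrec.const 1) (Primrec.const 0))
  exact (Primrec.list_foldl hlist (Primrec.const 0) (hstep.comp₂ Primrec₂.right)).of_eq
    (fun x => rfl)

lemma Ffn_eq (x : ℕ) : Ffn x = @encode ℚ (Primcodable.ofDenumerable ℚ).toEncodable (Q x) := by
  rw [encode_rat_eq, Q_num, Q_den, encode_int_ofNat]
  rfl


/-! ### Analysis -/

lemma key_cast (x : ℕ) : ((Nfn x : ℝ)) / 10 ^ Nat.factorial (x + 1) =
    ∑ n ∈ Finset.range (x + 1), (1 : ℝ) / 10 ^ Nat.factorial (n + 1) := by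
  induction x with
  | zero => norm_num [Nfn]
  | succ x ih =>
    have hle : Nat.factorial (x + 1) ≤ Nat.factorial (x + 2) :=
      Nat.factorial_le (by omega)
    have hpow : (10 : ℝ) ^ (Nat.factorial (x + 2) - Nat.factorial (x + 1)) *
        10 ^ Nat.factorial (x + 1) = 10 ^ Nat.factorial (x + 2) := by
      rw [← pow_add]; congr 1; omega
    have h1 : (10 : ℝ) ^ Nat.factorial (x + 1) ≠ 0 := by positivity
    have h2 : (10 : ℝ) ^ Nat.factorial (x + 2) ≠ 0 := by positivity
    rw [Finset.sum_range_succ, ← ih]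
    have hN : ((Nfn (x + 1) : ℝ)) =
        (Nfn x : ℝ) * 10 ^ (Nat.factorial (x + 2) - Nat.factorial (x + 1)) + 1 := by
      show ((Nfn x * 10 ^ (Nat.factorial (x + 2) - Nat.factorial (x + 1)) + 1 : ℕ) : ℝ) = _
      push_cast
      ring
    rw [hN, add_div]
    congr 1
    rw [div_eq_div_iff h2 h1]
    nlinarith [hpow]

lemma Q_cast (x : ℕ) : ((Q x : ℚ) : ℝ) =
    ∑ n ∈ Finset.range (x + 1), (1 : ℝ) / 10 ^ Nat.factorial (n + 1) := by
  rw [Rat.cast_def, Q_num, Q_den]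
  push_cast
  rw [show ((Dfn x : ℝ)) = 10 ^ Nat.factorial (x + 1) by unfold Dfn; push_cast; ring]
  exact key_cast x

lemma hsummable : Summable (fun n : ℕ => (1 : ℝ) / 10 ^ Nat.factorial (n + 1)) := by
  apply Summable.of_nonneg_of_le (fun n => by positivity) (fun n => ?_)
    (summable_geometric_of_lt_one (by norm_num) (by norm_num) (r := 1/10))
  rw [div_pow, one_pow]
  apply div_le_div_of_nonneg_left (by norm_num) (by positivity)
  exact pow_le_pow_right₀ (by norm_num) (le_trans (Nat.le_succ n) (Nat.self_le_factorial (n + 1)))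

lemma fact_add_le (m i : ℕ) (hm : 1 ≤ m) : Nat.factorial m + i ≤ Nat.factorial (m + i) := by
  induction i with
  | zero => simp
  | succ i ih =>
    have h1 : 0 < Nat.factorial (m + i) := Nat.factorial_pos _
    have harg : m + (i + 1) = (m + i) + 1 := by omega
    rw [harg, Nat.factorial_succ]
    have h3 : 2 * Nat.factorial (m + i) ≤ (m + i + 1) * Nat.factorial (m + i) :=
      Nat.mul_le_mul_right _ (by omega)
    omega

theorem main (x : ℕ) :
    |((Q x : ℚ) : ℝ) - ∑' n : ℕ, (1 : ℝ) / 10 ^ Nat.factorial (n + 1)| ≤ 1 / ((x : ℝ) + 1) := by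
  set f : ℕ → ℝ := fun n => (1 : ℝ) / 10 ^ Nat.factorial (n + 1) with hf
  have hsum := hsummable
  have hsplit := Summable.sum_add_tsum_nat_add (f := f) (x + 1) hsum
  have htail_sum : Summable (fun i => f (i + (x + 1))) := (summable_nat_add_iff (x + 1)).2 hsum
  have htail_nonneg : 0 ≤ ∑' i, f (i + (x + 1)) := tsum_nonneg fun i => by positivity
  rw [Q_cast]
  have habs : |∑ n ∈ Finset.range (x + 1), f n - ∑' n, f n| = ∑' i, f (i + (x + 1)) := by
    rw [abs_sub_comm, abs_of_nonneg (by linarith [hsplit])]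
    linarith [hsplit]
  rw [habs]
  -- bound the tail by a geometric series
  set F2 := Nat.factorial (x + 2) with hF2
  have hg : Summable (fun i : ℕ => (1 / 10 : ℝ) ^ F2 * (1 / 10) ^ i) :=
    (summable_geometric_of_lt_one (by norm_num) (by norm_num)).mul_left _
  have hterm : ∀ i : ℕ, f (i + (x + 1)) ≤ (1 / 10 : ℝ) ^ F2 * (1 / 10) ^ i := by
    intro i
    have hfa : F2 + i ≤ Nat.factorial (i + (x + 1) + 1) := by
      have := fact_add_le (x + 2) i (by omega)
      have harg : i + (x + 1) + 1 = x + 2 + i := by omega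
      rw [harg]
      exact this
    calc f (i + (x + 1)) = (1 / 10 : ℝ) ^ Nat.factorial (i + (x + 1) + 1) := by
          rw [hf]; simp [div_pow]
      _ ≤ (1 / 10 : ℝ) ^ (F2 + i) := pow_le_pow_of_le_one (by norm_num) (by norm_num) hfa
      _ = (1 / 10 : ℝ) ^ F2 * (1 / 10) ^ i := by rw [pow_add]
  have htail_le : ∑' i, f (i + (x + 1)) ≤ (1 / 10 : ℝ) ^ F2 * (1 - 1 / 10)⁻¹ := by
    calc ∑' i, f (i + (x + 1)) ≤ ∑' i : ℕ, (1 / 10 : ℝ) ^ F2 * (1 / 10) ^ i :=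
          Summable.tsum_le_tsum hterm htail_sum hg
      _ = (1 / 10 : ℝ) ^ F2 * (1 - 1 / 10)⁻¹ := by
          rw [tsum_mul_left, tsum_geometric_of_lt_one (by norm_num) (by norm_num)]
  -- final numeric bound
  have hxp : (0 : ℝ) < (x : ℝ) + 1 := by positivity
  have hx10 : ((x : ℝ) + 1) ≤ 10 ^ x := by
    have h2 : ((x : ℝ) + 1) ≤ 2 ^ x := by exact_mod_cast (Nat.lt_two_pow_self (n := x))
    have h2le : (2 : ℝ) ^ x ≤ 10 ^ x := pow_le_pow_left₀ (by norm_num) (by norm_num) x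
    linarith
  have hF2le : (1 / 10 : ℝ) ^ F2 ≤ (1 / 10 : ℝ) ^ (x + 2) :=
    pow_le_pow_of_le_one (by norm_num) (by norm_num) (Nat.self_le_factorial (x + 2))
  have hfin : (1 / 10 : ℝ) ^ (x + 2) * (1 - 1 / 10)⁻¹ ≤ 1 / ((x : ℝ) + 1) := by
    rw [le_div_iff₀ hxp]
    have hpos : (0 : ℝ) < (1 / 10 : ℝ) ^ x := by positivity
    have hkey : (1 / 10 : ℝ) ^ x * ((x : ℝ) + 1) ≤ 1 := by
      rw [div_pow, one_pow, div_mul_eq_mul_div, div_le_one (by positivity)]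
      linarith
    have hsplit2 : (1 / 10 : ℝ) ^ (x + 2) = (1 / 10 : ℝ) ^ x * (1 / 100) := by
      rw [pow_add]; norm_num
    rw [hsplit2]
    nlinarith [hkey, hpos]
  have : (1 / 10 : ℝ) ^ F2 * (1 - 1 / 10)⁻¹ ≤ 1 / ((x : ℝ) + 1) := by
    calc (1 / 10 : ℝ) ^ F2 * (1 - 1 / 10)⁻¹ ≤ (1 / 10 : ℝ) ^ (x + 2) * (1 - 1 / 10)⁻¹ := by
          apply mul_le_mul_of_nonneg_right hF2le (by norm_num)
      _ ≤ 1 / ((x : ℝ) + 1) := hfin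
  linarith

end PrimrecLiouville

theorem primrecReal_liouville :
    IsPrimrecReal (∑' n : ℕ, (1 : ℝ) / 10 ^ Nat.factorial (n + 1)) := by
  refine ⟨fun x => Denumerable.ofNat ℚ (PrimrecLiouville.Ffn x),
    (Primrec.ofNat ℚ).comp PrimrecLiouville.primrec_Ffn, fun x => ?_⟩
  have hAx : Denumerable.ofNat ℚ (PrimrecLiouville.Ffn x) = PrimrecLiouville.Q x := by
    rw [PrimrecLiouville.Ffn_eq]
    exact Denumerable.ofNat_encode _
  simp only []
  rw [hAx]
  exact PrimrecLiouville.main x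
end

section
/- A real number α is computable if and only if α has a primitive recursive approximation, i.e., if and only if there exist primitive recursive functions A : ℕ → ℚ and E : ℕ → ℚ such that E is monotonically decreasing, E(x) tends to 0 as x → ∞, and for all x ∈ ℕ, |A(x) − α| ≤ E(x). -/
/-- A real number is computable if some computable sequence of rationals
approximates it with error at most `1/(x+1)`. -/
def IsComputableReal (a : ℝ) : Prop :=
  ∃ A : ℕ → ℚ, Computable A ∧ ∀ x : ℕ, |(A x : ℝ) - a| ≤ 1 / ((x : ℝ) + 1)

open Encodable

namespace CRA

def bcount (p : ℕ → Bool) (n : ℕ) : ℕ := Nat.rec 0 (fun d acc => acc + cond (p d) 1 0) n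

theorem bcount_eq_countP (p : ℕ → Bool) (n : ℕ) :
    bcount p n = (List.range n).countP p := by
  induction n with
  | zero => rfl
  | succ n ih =>
    rw [List.range_succ, List.countP_append]
    show bcount p n + _ = _
    rw [ih]; cases h : p n <;> simp [List.countP_cons, h]

theorem primrec_bcount {α} [Primcodable α] {p : α → ℕ → Bool} (hp : Primrec₂ p) :
    Primrec₂ (fun a n => bcount (p a) n) := by
  have h : Primrec₂ (fun (q : α × ℕ) (yIH : ℕ × ℕ) => yIH.2 + cond (p q.1 yIH.1) 1 0) :=
    Primrec.nat_add.comp (Primrec.snd.comp Primrec.snd)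
      (Primrec.cond (hp.comp (Primrec.fst.comp Primrec.fst) (Primrec.fst.comp Primrec.snd))
        (Primrec.const 1) (Primrec.const 0))
  exact Primrec.nat_rec' Primrec.snd (Primrec.const 0) h

/-- Boolean coprimality test. -/
def coprimeb (a b : ℕ) : Bool :=
  bcount (fun d => (a % (d + 2) == 0) && (b % (d + 2) == 0)) (max a b + 1) == 0

theorem coprimeb_iff (a b : ℕ) : coprimeb a b = true ↔ Nat.Coprime a b := by
  have hz : ∀ n, (bcount (fun d => (a % (d + 2) == 0) && (b % (d + 2) == 0)) n = 0)
      ↔ ∀ d < n, ¬((d+2) ∣ a ∧ (d+2) ∣ b) := by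
    intro n
    rw [bcount_eq_countP, List.countP_eq_zero]
    constructor
    · intro h d hd hdvd
      have := h d (List.mem_range.2 hd)
      simp only [Bool.and_eq_true, beq_iff_eq, ← Nat.dvd_iff_mod_eq_zero] at this
      exact this ⟨hdvd.1, hdvd.2⟩
    · intro h d hd
      simp only [Bool.and_eq_true, beq_iff_eq, ← Nat.dvd_iff_mod_eq_zero]
      exact fun hc => h d (List.mem_range.1 hd) ⟨hc.1, hc.2⟩
  rw [coprimeb, beq_iff_eq, hz]
  constructor
  · intro h
    rcases Nat.eq_zero_or_pos (Nat.gcd a b) with hg | hg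
    · exfalso
      obtain ⟨ha, hb⟩ := Nat.gcd_eq_zero_iff.1 hg
      exact h 0 (by omega) (by simp [ha, hb])
    · rcases Nat.lt_or_ge (Nat.gcd a b) 2 with hg2 | hg2
      · have : Nat.gcd a b = 1 := by omega
        exact this
      · exfalso
        have hab : a ≠ 0 ∨ b ≠ 0 := by
          by_contra hc
          push_neg at hc
          simp [hc.1, hc.2] at hg2
        have hle : Nat.gcd a b ≤ max a b := by
          rcases hab with ha | hb
          · exact le_trans (Nat.le_of_dvd (Nat.pos_of_ne_zero ha) (Nat.gcd_dvd_left a b))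
              (le_max_left a b)
          · exact le_trans (Nat.le_of_dvd (Nat.pos_of_ne_zero hb) (Nat.gcd_dvd_right a b))
              (le_max_right a b)
        exact h (Nat.gcd a b - 2) (by omega)
          (by
            have h2 : Nat.gcd a b - 2 + 2 = Nat.gcd a b := by omega
            rw [h2]
            exact ⟨Nat.gcd_dvd_left a b, Nat.gcd_dvd_right a b⟩)
  · intro h d _ hdvd
    have := Nat.dvd_gcd hdvd.1 hdvd.2
    rw [Nat.Coprime.gcd_eq_one h] at this
    have := Nat.le_of_dvd one_pos this
    omega

theorem primrec_coprimeb : Primrec₂ coprimeb := by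
  have h1 : Primrec₂ (fun (ab : ℕ × ℕ) (d : ℕ) =>
      (ab.1 % (d + 2) == 0) && (ab.2 % (d + 2) == 0)) := by
    have hd2 : Primrec (fun (p : (ℕ × ℕ) × ℕ) => p.2 + 2) :=
      Primrec.nat_add.comp Primrec.snd (Primrec.const 2)
    have e1 : Primrec (fun (p : (ℕ × ℕ) × ℕ) => p.1.1 % (p.2 + 2) == 0) :=
      Primrec.beq.comp (Primrec.nat_mod.comp (Primrec.fst.comp Primrec.fst) hd2)
        (Primrec.const 0)
    have e2 : Primrec (fun (p : (ℕ × ℕ) × ℕ) => p.1.2 % (p.2 + 2) == 0) :=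
      Primrec.beq.comp (Primrec.nat_mod.comp (Primrec.snd.comp Primrec.fst) hd2)
        (Primrec.const 0)
    exact (Primrec.cond e1 e2 (Primrec.const false)).of_eq fun p => by
      cases h : (p.1.1 % (p.2 + 2) == 0) <;> simp [h]
  have h2 := primrec_bcount h1
  have h3 : Primrec (fun ab : ℕ × ℕ =>
      bcount (fun d => (ab.1 % (d + 2) == 0) && (ab.2 % (d + 2) == 0)) (max ab.1 ab.2 + 1)) :=
    h2.comp Primrec.id (Primrec.nat_add.comp (Primrec.nat_max.comp Primrec.fst Primrec.snd)
      (Primrec.const 1))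
  exact Primrec.beq.comp h3 (Primrec.const 0)

/-- raw encode on `ℚ` (the `Rat.instEncodable` instance) -/
abbrev rawE (q : ℚ) : ℕ := @Encodable.encode ℚ Rat.instEncodable q

theorem rawE_def (q : ℚ) : rawE q = Nat.pair (@Encodable.encode ℤ _ q.num) q.den := rfl

theorem encodeZ_natAbs (z : ℤ) : ((@Encodable.encode ℤ _ z) + 1) / 2 = z.natAbs := by
  rcases z with n | n
  · show (2 * n + 1) / 2 = n; omega
  · show (2 * n + 1 + 1) / 2 = n + 1; omega

/-- membership test for the range of `rawE` -/
def isS (m : ℕ) : Bool :=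
  (m.unpair.2 != 0) && coprimeb ((m.unpair.1 + 1) / 2) m.unpair.2

theorem primrec_isS : Primrec isS := by
  have hu2 : Primrec (fun m : ℕ => m.unpair.2) := Primrec.snd.comp Primrec.unpair
  have hu1 : Primrec (fun m : ℕ => (m.unpair.1 + 1) / 2) :=
    Primrec.nat_div.comp
      (Primrec.nat_add.comp (Primrec.fst.comp Primrec.unpair) (Primrec.const 1))
      (Primrec.const 2)
  have h1 : Primrec (fun m : ℕ => (m.unpair.2 != 0)) :=
    (Primrec.not.comp (Primrec.beq.comp hu2 (Primrec.const 0))).of_eq fun m => by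
      simp [Bool.not_eq_true', bne]
  exact (Primrec.cond h1 (primrec_coprimeb.comp hu1 hu2) (Primrec.const false)).of_eq
    fun m => by cases h : (m.unpair.2 != 0) <;> simp [isS, h]

theorem isS_iff (m : ℕ) : isS m = true ↔ m ∈ Set.range rawE := by
  constructor
  · intro h
    rw [isS, Bool.and_eq_true, bne_iff_ne, coprimeb_iff] at h
    obtain ⟨hd, hcop⟩ := h
    obtain ⟨z, hz⟩ : ∃ z : ℤ, @Encodable.encode ℤ _ z = m.unpair.1 :=
      ⟨Equiv.intEquivNat.symm m.unpair.1, Equiv.intEquivNat.apply_symm_apply m.unpair.1⟩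
    have hcop' : z.natAbs.Coprime m.unpair.2 := by
      rwa [← hz, encodeZ_natAbs] at hcop
    refine ⟨⟨z, m.unpair.2, hd, hcop'⟩, ?_⟩
    rw [rawE_def]
    show Nat.pair (@Encodable.encode ℤ _ z) m.unpair.2 = m
    rw [hz]
    exact Nat.pair_unpair m
  · rintro ⟨q, rfl⟩
    rw [isS, rawE_def, Bool.and_eq_true, Nat.unpair_pair]
    refine ⟨bne_iff_ne.2 q.den_nz, ?_⟩
    rw [coprimeb_iff, encodeZ_natAbs]
    exact q.reduced

/-- count of raw codes below `n` -/
def cnt (n : ℕ) : ℕ := bcount isS n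

theorem primrec_cnt : Primrec cnt :=
  (primrec_bcount ((primrec_isS.comp Primrec.snd).to₂ :
      Primrec₂ (fun (_ : Unit) (d : ℕ) => isS d))).comp (Primrec.const ()) Primrec.id

theorem encode_eq_cnt (q : ℚ) :
    @Encodable.encode ℚ Rat.instDenumerable.toEncodable q = cnt (rawE q) := by
  have h0 : @Encodable.encode ℚ Rat.instDenumerable.toEncodable q =
      (List.range (rawE q)).countP
        (fun m => @decide (m ∈ Set.range rawE) (@Encodable.decidableRangeEncode ℚ Rat.instEncodable m)) :=
    rfl
  rw [h0, cnt, bcount_eq_countP]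
  apply List.countP_congr
  intro m _
  letI := @Encodable.decidableRangeEncode ℚ Rat.instEncodable
  exact ⟨fun h => (isS_iff m).2 (of_decide_eq_true h),
    fun h => decide_eq_true ((isS_iff m).1 h)⟩

/-- the sequence 1/(k+1) as an explicit reduced rational -/
def q1 (k : ℕ) : ℚ := ⟨1, k + 1, Nat.succ_ne_zero k, Nat.coprime_one_left _⟩

theorem q1_eq (k : ℕ) : q1 k = 1 / ((k : ℚ) + 1) := by
  rw [q1, Rat.mk_eq_divInt, Rat.divInt_eq_div]
  push_cast
  ring

theorem rawE_q1 (k : ℕ) : rawE (q1 k) = Nat.pair 2 (k + 1) := rfl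

theorem primrec_q1 : Primrec q1 := by
  have h : Primrec (fun k => cnt (Nat.pair 2 (k + 1))) :=
    primrec_cnt.comp (Primrec₂.natPair.comp (Primrec.const 2)
      (Primrec.nat_add.comp Primrec.id (Primrec.const 1)))
  have h2 : Primrec (fun k => Denumerable.ofNat ℚ (cnt (Nat.pair 2 (k + 1)))) :=
    (Primrec.ofNat ℚ).comp h
  exact h2.of_eq fun k => by
    rw [← rawE_q1 k, ← encode_eq_cnt (q1 k)]
    exact @Denumerable.ofNat_encode ℚ Rat.instDenumerable (q1 k)

theorem cnt_succ (n : ℕ) : cnt (n + 1) = cnt n + cond (isS n) 1 0 := rfl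

theorem cnt_mono : Monotone cnt := by
  apply monotone_nat_of_le_succ
  intro n
  rw [cnt_succ]
  omega

theorem cnt_lt_of_isS {j n : ℕ} (hj : isS j = true) (hjn : j < n) : cnt j < cnt n := by
  have h1 : cnt (j + 1) = cnt j + 1 := by rw [cnt_succ, hj]; rfl
  have h2 := cnt_mono (Nat.succ_le_of_lt hjn)
  simp only [Nat.succ_eq_add_one] at h2
  omega

theorem isS_pair_one (i : ℕ) : isS (Nat.pair i 1) = true := by
  rw [isS, Nat.unpair_pair, Bool.and_eq_true, bne_iff_ne]
  exact ⟨one_ne_zero, (coprimeb_iff _ _).2 (Nat.coprime_one_right _)⟩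

theorem pair_one_lt (i : ℕ) : Nat.pair i 1 < Nat.pair (i + 1) 1 := by
  have hsq : i * i ≤ (i + 1) * (i + 1) := Nat.mul_le_mul (by omega) (by omega)
  rw [Nat.pair, Nat.pair]
  split <;> split <;> omega

theorem le_cnt_pair_one (i : ℕ) : i + 1 ≤ cnt (Nat.pair i 1 + 1) := by
  induction i with
  | zero =>
    have h0 : cnt (Nat.pair 0 1 + 1) = cnt (Nat.pair 0 1) + 1 := by
      rw [cnt_succ, isS_pair_one]; rfl
    omega
  | succ i ih =>
    have hlt : Nat.pair i 1 + 1 ≤ Nat.pair (i + 1) 1 := pair_one_lt i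
    have h1 : cnt (Nat.pair (i + 1) 1 + 1) = cnt (Nat.pair (i + 1) 1) + 1 := by
      rw [cnt_succ, isS_pair_one]; rfl
    have h2 := cnt_mono hlt
    omega

theorem pair_one_le (e : ℕ) : Nat.pair e 1 ≤ e * e + e + 1 := by
  rw [Nat.pair]
  split <;> omega

/-- recover the raw code from the `Primcodable` code -/
def rawOf (e : ℕ) : ℕ :=
  (List.range (e * e + e + 2)).findIdx (fun m => isS m && (cnt m == e))

theorem primrec_rawOf : Primrec rawOf := by
  have hrange : Primrec (fun e : ℕ => List.range (e * e + e + 2)) :=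
    Primrec.list_range.comp (Primrec.nat_add.comp
      (Primrec.nat_add.comp (Primrec.nat_mul.comp Primrec.id Primrec.id) Primrec.id)
      (Primrec.const 2))
  have hp : Primrec₂ (fun (e : ℕ) (m : ℕ) => isS m && (cnt m == e)) := by
    have h1 : Primrec (fun p : ℕ × ℕ => isS p.2) := primrec_isS.comp Primrec.snd
    have h2 : Primrec (fun p : ℕ × ℕ => (cnt p.2 == p.1)) :=
      Primrec.beq.comp (primrec_cnt.comp Primrec.snd) Primrec.fst
    exact (Primrec.cond h1 h2 (Primrec.const false)).of_eq fun p => by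
      cases h : isS p.2 <;> simp [h]
  exact Primrec.list_findIdx hrange hp

theorem rawOf_encode (r : ℚ) :
    rawOf (@Encodable.encode ℚ Rat.instDenumerable.toEncodable r) = rawE r := by
  set e := @Encodable.encode ℚ Rat.instDenumerable.toEncodable r with he
  have hecnt : cnt (rawE r) = e := (encode_eq_cnt r).symm
  have hbound : rawE r ≤ e * e + e + 1 := by
    refine le_trans ?_ (pair_one_le e)
    by_contra hgt
    push_neg at hgt
    have h1 : Nat.pair e 1 + 1 ≤ rawE r := hgt
    have h2 := cnt_mono h1
    have h3 := le_cnt_pair_one e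
    omega
  have hlen : rawE r < (List.range (e * e + e + 2)).length := by
    rw [List.length_range]; omega
  rw [rawOf, List.findIdx_eq hlen]
  constructor
  · simp only [List.getElem_range]
    rw [(isS_iff (rawE r)).2 ⟨r, rfl⟩, hecnt]
    simp
  · intro j hji
    simp only [List.getElem_range]
    by_contra hc
    rw [Bool.not_eq_false, Bool.and_eq_true, beq_iff_eq] at hc
    have := cnt_lt_of_isS hc.1 hji
    omega

/-- decide whether the rational with Primcodable-code `e` is `≤ 1/(x+1)` -/
def isLe (x e : ℕ) : Bool :=
  ((rawOf e).unpair.1 % 2 == 1) ||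
    (decide ((rawOf e).unpair.1 / 2 * (x + 1) ≤ (rawOf e).unpair.2))

theorem primrec_isLe : Primrec₂ isLe := by
  have hro : Primrec (fun p : ℕ × ℕ => rawOf p.2) := primrec_rawOf.comp Primrec.snd
  have h1 : Primrec (fun p : ℕ × ℕ => ((rawOf p.2).unpair.1 % 2 == 1)) :=
    Primrec.beq.comp
      (Primrec.nat_mod.comp (Primrec.fst.comp (Primrec.unpair.comp hro)) (Primrec.const 2))
      (Primrec.const 1)
  have h2 : Primrec (fun p : ℕ × ℕ =>
      (decide ((rawOf p.2).unpair.1 / 2 * (p.1 + 1) ≤ (rawOf p.2).unpair.2))) :=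
    PrimrecPred.decide <| Primrec.nat_le.comp
      (Primrec.nat_mul.comp
        (Primrec.nat_div.comp (Primrec.fst.comp (Primrec.unpair.comp hro)) (Primrec.const 2))
        (Primrec.nat_add.comp Primrec.fst (Primrec.const 1)))
      (Primrec.snd.comp (Primrec.unpair.comp hro))
  exact (Primrec.cond h1 (Primrec.const true) h2).of_eq fun p => by
    cases h : ((rawOf p.2).unpair.1 % 2 == 1) <;> simp [isLe, h]

theorem isLe_iff (x : ℕ) (r : ℚ) :
    isLe x (@Encodable.encode ℚ Rat.instDenumerable.toEncodable r) = true ↔ r ≤ q1 x := by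
  rw [isLe, rawOf_encode]
  have hu1 : (rawE r).unpair.1 = @Encodable.encode ℤ _ r.num := by
    rw [rawE_def, Nat.unpair_pair]
  have hu2 : (rawE r).unpair.2 = r.den := by rw [rawE_def, Nat.unpair_pair]
  rw [hu1, hu2]
  have hle : r ≤ q1 x ↔ r.num * ((x : ℤ) + 1) ≤ (r.den : ℤ) := by
    rw [Rat.le_iff]
    show _ ↔ _
    have hq1num : (q1 x).num = 1 := rfl
    have hq1den : (q1 x).den = x + 1 := rfl
    rw [hq1num, hq1den, one_mul]
    push_cast
    rfl
  rcases hnum : r.num with n | n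
  · have henc : @Encodable.encode ℤ _ (Int.ofNat n) = 2 * n := rfl
    rw [henc]
    have hmod : ((2 * n) % 2 == 1) = false := by simp [Nat.mul_mod_right]
    rw [hmod, Bool.false_or, decide_eq_true_eq]
    rw [hle, hnum]
    have hdiv : 2 * n / 2 = n := by omega
    rw [hdiv]
    constructor
    · intro h
      have : (n : ℤ) * ((x : ℤ) + 1) ≤ (r.den : ℤ) := by exact_mod_cast h
      simpa using this
    · intro h
      have : (n : ℤ) * ((x : ℤ) + 1) ≤ (r.den : ℤ) := by simpa using h
      exact_mod_cast this
  · have henc : @Encodable.encode ℤ _ (Int.negSucc n) = 2 * n + 1 := rfl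
    rw [henc]
    have hmod : ((2 * n + 1) % 2 == 1) = true := by simp [Nat.mul_add_mod]
    rw [hmod, Bool.true_or]
    simp only [true_iff]
    rw [hle, hnum]
    have hneg : (Int.negSucc n) * ((x : ℤ) + 1) ≤ 0 := by
      apply mul_nonpos_of_nonpos_of_nonneg
      · exact le_of_lt (Int.negSucc_lt_zero n)
      · positivity
    exact le_trans hneg (by positivity)


/-- the Primcodable-instance encode on ℚ -/
def encQ (r : ℚ) : ℕ := @Encodable.encode ℚ Rat.instDenumerable.toEncodable r

theorem primrec_encQ : Primrec encQ := Primrec.encode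

theorem ofNat_encQ (r : ℚ) : Denumerable.ofNat ℚ (encQ r) = r :=
  @Denumerable.ofNat_encode ℚ Rat.instDenumerable r

theorem q1_anti : Antitone q1 := by
  intro a b hab
  rw [q1_eq, q1_eq]
  apply one_div_le_one_div_of_le
  · positivity
  · have : (a : ℚ) ≤ (b : ℚ) := by exact_mod_cast hab
    linarith

theorem q1_cast (k : ℕ) : ((q1 k : ℚ) : ℝ) = 1 / ((k : ℝ) + 1) := by
  rw [q1_eq]
  push_cast
  ring

end CRA

theorem CRA.computable_dir (α : ℝ) (A : ℕ → ℚ) (hA : Computable A)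
    (hAb : ∀ x : ℕ, |(A x : ℝ) - α| ≤ 1 / ((x : ℝ) + 1)) :
    ∃ A' E : ℕ → ℚ, Primrec A' ∧ Primrec E ∧ Antitone E ∧
      Filter.Tendsto (fun x => (E x : ℝ)) Filter.atTop (nhds 0) ∧
      ∀ x : ℕ, |(A' x : ℝ) - α| ≤ (E x : ℝ) := by
  classical
  open Nat.Partrec.Code in
  -- get a code for `n ↦ encQ (A n)`
  have hg : Computable (fun n => CRA.encQ (A n)) := CRA.primrec_encQ.to_comp.comp hA
  have hgp : Nat.Partrec ((fun n => CRA.encQ (A n) : ℕ → ℕ) : ℕ →. ℕ) := Partrec.nat_iff.1 hg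
  obtain ⟨c, hc⟩ := Nat.Partrec.Code.exists_code.1 hgp
  have hev : ∀ k, CRA.encQ (A k) ∈ c.eval k := fun k => by
    rw [hc]; exact Part.mem_some _
  obtain ⟨n₀, hn₀⟩ := evaln_complete.1 (hev 0)
  set m : ℕ → ℕ := fun s => Nat.rec 0
    (fun y IH => cond ((evaln (y + 1 + n₀) c (IH + 1)).isSome) (IH + 1) IH) s with hm
  have hstep : ∀ s, m (s + 1) =
      cond ((evaln (s + 1 + n₀) c (m s + 1)).isSome) (m s + 1) (m s) := fun s => rfl
  have halt : ∀ s, (evaln (s + n₀) c (m s)).isSome := by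
    intro s
    induction s with
    | zero =>
      show (evaln (0 + n₀) c 0).isSome
      rw [Nat.zero_add]
      exact Option.isSome_iff_exists.2 ⟨_, hn₀⟩
    | succ s ih =>
      cases h : (evaln (s + 1 + n₀) c (m s + 1)).isSome with
      | true =>
        rw [hstep s, h]
        exact h
      | false =>
        rw [hstep s, h]
        obtain ⟨v, hv⟩ := Option.isSome_iff_exists.1 ih
        exact Option.isSome_iff_exists.2 ⟨v, evaln_mono (by omega) hv⟩
  have hvalue : ∀ s, evaln (s + n₀) c (m s) = some (CRA.encQ (A (m s))) := by
    intro s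
    obtain ⟨v, hv⟩ := Option.isSome_iff_exists.1 (halt s)
    have hs := evaln_sound (show v ∈ evaln (s + n₀) c (m s) from hv)
    rw [hc] at hs
    have : v = CRA.encQ (A (m s)) := Part.mem_some_iff.1 hs
    rw [hv, this]
  have hmono : Monotone m := by
    apply monotone_nat_of_le_succ
    intro s
    rw [hstep s]
    cases (evaln (s + 1 + n₀) c (m s + 1)).isSome <;> simp
  have hunbdd : ∀ j, ∃ s, j ≤ m s := by
    intro j
    induction j with
    | zero => exact ⟨0, Nat.zero_le _⟩
    | succ j ih =>
      obtain ⟨s₀, hs₀⟩ := ih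
      obtain ⟨K, hK⟩ := evaln_complete.1 (hev (j + 1))
      set s₁ := max s₀ K with hs₁
      rcases Nat.lt_or_ge (m s₁) (j + 1) with hlt | hge
      · have hms₁ : m s₁ = j :=
          le_antisymm (by omega) (le_trans hs₀ (hmono (le_max_left _ _)))
        refine ⟨s₁ + 1, ?_⟩
        have hKle : K ≤ s₁ + 1 + n₀ := by
          have := le_max_right s₀ K
          omega
        have hsome : (evaln (s₁ + 1 + n₀) c (j + 1)).isSome =  true :=
          Option.isSome_iff_exists.2 ⟨_, evaln_mono hKle hK⟩
        rw [hstep s₁, hms₁, hsome]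
        simp
      · exact ⟨s₁, hge⟩
  -- primrec of m
  have hm_pr : Primrec m := by
    have he : Primrec (fun p : ℕ × ℕ => evaln (p.1 + 1 + n₀) c (p.2 + 1)) :=
      Nat.Partrec.Code.primrec_evaln.comp
        (Primrec.pair
          (Primrec.pair
            (Primrec.nat_add.comp
              (Primrec.nat_add.comp Primrec.fst (Primrec.const 1)) (Primrec.const n₀))
            (Primrec.const c))
          (Primrec.nat_add.comp Primrec.snd (Primrec.const 1)))
    exact Primrec.nat_rec₁ 0
      (Primrec.cond (Primrec.option_isSome.comp he)
        (Primrec.nat_add.comp Primrec.snd (Primrec.const 1)) Primrec.snd)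
  have hev_pr : Primrec (fun s => evaln (s + n₀) c (m s)) :=
    Nat.Partrec.Code.primrec_evaln.comp
      (Primrec.pair
        (Primrec.pair (Primrec.nat_add.comp Primrec.id (Primrec.const n₀)) (Primrec.const c))
        hm_pr)
  refine ⟨fun s => Denumerable.ofNat ℚ ((evaln (s + n₀) c (m s)).getD 0),
    fun s => CRA.q1 (m s), ?_, ?_, ?_, ?_, ?_⟩
  · exact (Primrec.ofNat ℚ).comp (Primrec.option_getD.comp hev_pr (Primrec.const 0))
  · exact CRA.primrec_q1.comp hm_pr
  · exact fun s t hst => CRA.q1_anti (hmono hst)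
  · have h1 : Filter.Tendsto m Filter.atTop Filter.atTop := by
      rw [Filter.tendsto_atTop]
      intro b
      obtain ⟨s, hs⟩ := hunbdd b
      exact Filter.eventually_atTop.2 ⟨s, fun t ht => le_trans hs (hmono ht)⟩
    have h2 := (tendsto_one_div_add_atTop_nhds_zero_nat (𝕜 := ℝ)).comp h1
    exact h2.congr fun s => (CRA.q1_cast (m s)).symm
  · intro x
    show |((Denumerable.ofNat ℚ ((evaln (x + n₀) c (m x)).getD 0) : ℚ) : ℝ) - α| ≤
      ((CRA.q1 (m x) : ℚ) : ℝ)
    rw [hvalue x]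
    show |((Denumerable.ofNat ℚ (CRA.encQ (A (m x))) : ℚ) : ℝ) - α| ≤ _
    rw [CRA.ofNat_encQ, CRA.q1_cast]
    exact hAb (m x)

theorem CRA.backward_dir (α : ℝ) (A E : ℕ → ℚ) (hA : Primrec A) (hE : Primrec E)
    (_hanti : Antitone E)
    (htend : Filter.Tendsto (fun x => (E x : ℝ)) Filter.atTop (nhds 0))
    (hb : ∀ x : ℕ, |(A x : ℝ) - α| ≤ (E x : ℝ)) :
    ∃ A' : ℕ → ℚ, Computable A' ∧ ∀ x : ℕ, |(A' x : ℝ) - α| ≤ 1 / ((x : ℝ) + 1) := by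
  classical
  have hexists : ∀ x : ℕ, ∃ n, CRA.isLe x (CRA.encQ (E n)) = true := by
    intro x
    have hpos : (0 : ℝ) < 1 / ((x : ℝ) + 1) := by positivity
    obtain ⟨n, hn⟩ := (Filter.Tendsto.eventually_lt_const hpos htend).exists
    refine ⟨n, (CRA.isLe_iff x (E n)).2 ?_⟩
    rw [← Rat.cast_le (K := ℝ), CRA.q1_cast]
    exact le_of_lt hn
  set N : ℕ → ℕ := fun x => Nat.find (hexists x) with hN
  refine ⟨fun x => A (N x), ?_, ?_⟩
  · -- computability
    have hp : Computable₂ (fun (x n : ℕ) => CRA.isLe x (CRA.encQ (E n))) :=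
      (CRA.primrec_isLe.comp Primrec.fst
        (CRA.primrec_encQ.comp (hE.comp Primrec.snd))).to_comp
    have hF : Partrec (fun x : ℕ =>
        (Nat.rfind ((fun n => CRA.isLe x (CRA.encQ (E n)) : ℕ → Bool) : ℕ →. Bool)).map A) :=
      Partrec.map (Partrec.rfind hp.partrec₂) ((hA.to_comp.comp Computable.snd).to₂)
    apply hF.of_eq_tot
    intro x
    have hfind : N x ∈ Nat.rfind ((fun n => CRA.isLe x (CRA.encQ (E n)) : ℕ → Bool) : ℕ →. Bool) := by
      rw [Nat.mem_rfind]
      constructor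
      · exact Part.mem_some_iff.2 (Nat.find_spec (hexists x)).symm
      · intro k hk
        have := Nat.find_min (hexists x) hk
        exact Part.mem_some_iff.2 (by simpa using Ne.symm this)
    exact Part.mem_map A hfind
  · intro x
    have h1 : E (N x) ≤ CRA.q1 x := (CRA.isLe_iff x (E (N x))).1 (Nat.find_spec (hexists x))
    have h2 : (E (N x) : ℝ) ≤ 1 / ((x : ℝ) + 1) := by
      rw [← CRA.q1_cast]
      exact_mod_cast h1
    exact le_trans (hb (N x)) h2


theorem computableReal_iff_primrec_approximation (α : ℝ) :
    IsComputableReal α ↔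
      ∃ A E : ℕ → ℚ, Primrec A ∧ Primrec E ∧ Antitone E ∧
        Filter.Tendsto (fun x => (E x : ℝ)) Filter.atTop (nhds 0) ∧
        ∀ x : ℕ, |(A x : ℝ) - α| ≤ (E x : ℝ) := by
  constructor
  · rintro ⟨A, hA, hAb⟩
    exact CRA.computable_dir α A hA hAb
  · rintro ⟨A, E, hA, hE, hanti, htend, hb⟩
    exact CRA.backward_dir α A E hA hE hanti htend hb
end

section
/- There exists a computable real number α such that no primitive recursive function A : ℕ → ℚ satisfies |A(x) − α| ≤ 1/(x+1) for all x ∈ ℕ. In fact, if f : ℕ → {0,1} is any computable function that is not primitive recursive, then α = Σ_{n=0}^∞ f(n)/4ⁿ is such a real number. -/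
open Nat.Partrec Nat.Partrec.Code Encodable Denumerable

set_option maxHeartbeats 1000000

namespace NPA



def sanitize : Code → Code
  | .zero => .zero
  | .succ => .succ
  | .left => .left
  | .right => .right
  | .pair cf cg => .pair (sanitize cf) (sanitize cg)
  | .comp cf cg => .comp (sanitize cf) (sanitize cg)
  | .prec cf cg => .prec (sanitize cf) (sanitize cg)
  | .rfind' _ => .zero

theorem sanitize_dom : ∀ c n, ∃ v, v ∈ eval (sanitize c) n := by
  intro c
  induction c with
  | zero => intro n; exact ⟨0, ⟨trivial, rfl⟩⟩
  | succ => intro n; exact ⟨n + 1, by simp [sanitize, eval]⟩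
  | left => intro n; exact ⟨n.unpair.1, by simp [sanitize, eval]⟩
  | right => intro n; exact ⟨n.unpair.2, by simp [sanitize, eval]⟩
  | pair cf cg ihf ihg =>
      intro n
      obtain ⟨a, ha⟩ := ihf n; obtain ⟨b, hb⟩ := ihg n
      refine ⟨Nat.pair a b, ?_⟩
      simp [sanitize, eval, Seq.seq]
      exact ⟨ha, hb⟩
  | comp cf cg ihf ihg =>
      intro n
      obtain ⟨b, hb⟩ := ihg n; obtain ⟨a, ha⟩ := ihf b
      refine ⟨a, ?_⟩
      simp only [sanitize, eval]
      exact Part.mem_bind_iff.2 ⟨b, hb, ha⟩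
  | prec cf cg ihf ihg =>
      intro n
      simp only [sanitize, eval, Nat.unpaired]
      induction (Nat.unpair n).2 with
      | zero => exact ihf _
      | succ m ihm =>
          obtain ⟨i, hi⟩ := ihm
          obtain ⟨v, hv⟩ := ihg (Nat.pair (Nat.unpair n).1 (Nat.pair m i))
          refine ⟨v, ?_⟩
          simp only [Nat.rec_add_one]
          exact Part.mem_bind_iff.2 ⟨i, hi, hv⟩
  | rfind' cf ih => intro n; exact ⟨0, ⟨trivial, rfl⟩⟩

theorem sanitize_total (c : Code) (n : ℕ) : (eval (sanitize c) n).Dom :=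
  Part.dom_iff_mem.2 (sanitize_dom c n)

theorem sanitize_prim : Primrec sanitize := by
  have := Nat.Partrec.Code.primrec_recOn (α := Code) (σ := Code)
    (c := id) Primrec.id
    (z := fun _ => Code.zero) (Primrec.const _)
    (s := fun _ => Code.succ) (Primrec.const _)
    (l := fun _ => Code.left) (Primrec.const _)
    (r := fun _ => Code.right) (Primrec.const _)
    (pr := fun _ _ _ s1 s2 => Code.pair s1 s2)
    (primrec₂_pair.comp (Primrec.fst.comp <| Primrec.snd.comp <| Primrec.snd.comp Primrec.snd)
      (Primrec.snd.comp <| Primrec.snd.comp <| Primrec.snd.comp Primrec.snd))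
    (co := fun _ _ _ s1 s2 => Code.comp s1 s2)
    (primrec₂_comp.comp (Primrec.fst.comp <| Primrec.snd.comp <| Primrec.snd.comp Primrec.snd)
      (Primrec.snd.comp <| Primrec.snd.comp <| Primrec.snd.comp Primrec.snd))
    (pc := fun _ _ _ s1 s2 => Code.prec s1 s2)
    (primrec₂_prec.comp (Primrec.fst.comp <| Primrec.snd.comp <| Primrec.snd.comp Primrec.snd)
      (Primrec.snd.comp <| Primrec.snd.comp <| Primrec.snd.comp Primrec.snd))
    (rf := fun _ _ _ => Code.zero) (Primrec.const _)
  refine this.of_eq fun c => ?_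
  induction c with
  | zero => rfl
  | succ => rfl
  | left => rfl
  | right => rfl
  | pair cf cg ihf ihg => simp_all [sanitize]
  | comp cf cg ihf ihg => simp_all [sanitize]
  | prec cf cg ihf ihg => simp_all [sanitize]
  | rfind' cf ih => rfl

/-- the diagonal function -/
def g (n : ℕ) : ℕ :=
  if (eval (sanitize (ofNat Code n)) n).get (sanitize_total _ _) = 0 then 1 else 0

theorem g_le_one (n : ℕ) : g n ≤ 1 := by
  unfold g; split <;> simp

theorem g_computable : Computable g := by
  have h1 : Computable fun n : ℕ => sanitize (ofNat Code n) :=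
    sanitize_prim.to_comp.comp (Computable.ofNat Code)
  have h2 : Partrec fun n : ℕ => eval (sanitize (ofNat Code n)) n :=
    eval_part.comp h1 Computable.id
  have h3 : Partrec fun n : ℕ =>
      (eval (sanitize (ofNat Code n)) n).map fun v => if v = 0 then 1 else 0 :=
    h2.map ((Primrec.ite (Primrec.eq.comp Primrec.snd (Primrec.const 0))
      (Primrec.const 1) (Primrec.const 0)).to_comp.to₂)
  exact h3.of_eq_tot fun n =>
    Part.mem_map _ (Part.get_mem (sanitize_total _ _))

theorem prim_code {f : ℕ → ℕ} (hf : Nat.Primrec f) :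
    ∃ c : Code, ∀ n, eval (sanitize c) n = Part.some (f n) := by
  induction hf with
  | zero => exact ⟨.zero, fun n => rfl⟩
  | succ => exact ⟨.succ, fun n => rfl⟩
  | left => exact ⟨.left, fun n => rfl⟩
  | right => exact ⟨.right, fun n => rfl⟩
  | pair hf hg ihf ihg =>
      obtain ⟨cf, hcf⟩ := ihf; obtain ⟨cg, hcg⟩ := ihg
      exact ⟨.pair cf cg, fun n => by
        simp [sanitize, eval, hcf, hcg, Seq.seq]⟩
  | comp hf hg ihf ihg =>
      obtain ⟨cf, hcf⟩ := ihf; obtain ⟨cg, hcg⟩ := ihg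
      exact ⟨.comp cf cg, fun n => by
        simp [sanitize, eval, hcg]; exact (Part.bind_some _ _).trans (hcf _)⟩
  | prec hf hg ihf ihg =>
      obtain ⟨cf, hcf⟩ := ihf; obtain ⟨cg, hcg⟩ := ihg
      refine ⟨.prec cf cg, fun n => ?_⟩
      simp only [sanitize, eval, Nat.unpaired]
      induction (Nat.unpair n).2 with
      | zero => simpa using hcf _
      | succ m ihm =>
          simp only [Nat.rec_add_one, ihm, Part.bind_some]
          simpa using hcg _

theorem g_not_primrec : ¬ Primrec g := by
  intro hp
  obtain ⟨c, hc⟩ := prim_code (Primrec.nat_iff.1 hp)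
  set N := encode c with hN
  have hm : g N ∈ eval (sanitize (ofNat Code N)) N := by
    rw [hN, ofNat_encode, hc]; exact Part.mem_some _
  have h2 : (eval (sanitize (ofNat Code N)) N).get (sanitize_total _ _) = g N :=
    Part.get_eq_of_mem hm _
  have hA : g N = if (eval (sanitize (ofNat Code N)) N).get (sanitize_total _ _) = 0
      then 1 else 0 := rfl
  rw [h2] at hA
  by_cases h : g N = 0 <;> simp [h] at hA




/-! ### nat-level gcd, primrec -/

def gstep (p : ℕ × ℕ) : ℕ × ℕ := if p.1 = 0 then p else (p.2 % p.1, p.1)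

def gcdF (a b : ℕ) : ℕ := (gstep^[a + 1] (a, b)).2

theorem gstep_zero (b : ℕ) : gstep (0, b) = (0, b) := by simp [gstep]

theorem gcdF_aux : ∀ k, ∀ a b, a ≤ k → (gstep^[k + 1] (a, b)).2 = Nat.gcd a b := by
  intro k
  induction k using Nat.strong_induction_on with
  | _ k ih =>
    intro a b ha
    rcases Nat.eq_zero_or_pos a with h | h
    · subst h
      rw [Function.iterate_fixed (gstep_zero b)]
      simp
    · obtain ⟨k, rfl⟩ : ∃ k', k = k' + 1 := ⟨k - 1, by omega⟩
      rw [Function.iterate_succ_apply,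
        show gstep (a, b) = (b % a, a) by simp [gstep, Nat.pos_iff_ne_zero.1 h],
        ih k (by omega) _ _ (by have := Nat.mod_lt b h; omega)]
      exact (Nat.gcd_rec a b).symm

theorem gcdF_eq (a b : ℕ) : gcdF a b = Nat.gcd a b := gcdF_aux a a b le_rfl

theorem gstep_primrec : Primrec gstep :=
  Primrec.ite (Primrec.eq.comp Primrec.fst (Primrec.const 0)) Primrec.id
    (Primrec.pair (Primrec.nat_mod.comp Primrec.snd Primrec.fst) Primrec.fst)

theorem gcdF_primrec : Primrec₂ gcdF := by
  have h2 : Primrec fun p : ℕ × ℕ => (gstep^[p.1 + 1] p).2 :=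
    Primrec.snd.comp <| Primrec.nat_iterate (Primrec.succ.comp Primrec.fst) Primrec.id
      (gstep_primrec.comp Primrec.snd).to₂
  exact h2.to₂.of_eq fun a b => rfl

/-! ### the predicate χ, counting function, and inverse search -/

def χ (m : ℕ) : Bool :=
  decide (0 < m.unpair.2) && decide (gcdF ((m.unpair.1 + 1) / 2) m.unpair.2 = 1)

def cnt (m : ℕ) : ℕ := Nat.rec 0 (fun k acc => acc + cond (χ k) 1 0) m

theorem cnt_succ (m : ℕ) : cnt (m + 1) = cnt m + cond (χ m) 1 0 := rfl

def w (n : ℕ) : ℕ :=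
  Nat.rec 0 (fun m acc => acc + cond (decide (cnt (m + 1) ≤ n)) 1 0) ((n + 2) ^ 2)

theorem χ_primrec : Primrec χ := by
  have hu1 : Primrec fun m : ℕ => m.unpair.1 := Primrec.fst.comp Primrec.unpair
  have hu2 : Primrec fun m : ℕ => m.unpair.2 := Primrec.snd.comp Primrec.unpair
  have h1 : Primrec fun m : ℕ => (m.unpair.1 + 1) / 2 :=
    Primrec.nat_div.comp (Primrec.succ.comp hu1) (Primrec.const 2)
  have h2 : Primrec fun m : ℕ => gcdF ((m.unpair.1 + 1) / 2) m.unpair.2 :=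
    gcdF_primrec.comp h1 hu2
  exact (Primrec.dom_bool₂ (· && ·)).comp
    (Primrec.nat_lt.comp (Primrec.const 0) hu2).decide
    (Primrec.eq.comp h2 (Primrec.const 1)).decide

theorem cnt_primrec : Primrec cnt :=
  Primrec.nat_rec₁ 0 ((Primrec.nat_add.comp Primrec.snd
    (Primrec.cond (χ_primrec.comp Primrec.fst) (Primrec.const 1) (Primrec.const 0))).to₂)

theorem w_primrec : Primrec w := by
  have hsq : Primrec fun n : ℕ => (n + 2) ^ 2 := by
    have := Primrec.nat_mul.comp (Primrec.succ.comp Primrec.succ)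
      (Primrec.succ.comp Primrec.succ) (α := ℕ)
    exact this.of_eq fun n => by rw [pow_two]
  exact (Primrec.nat_rec' hsq (Primrec.const 0)
    ((Primrec.nat_add.comp (Primrec.snd.comp Primrec.snd)
      (Primrec.cond (Primrec.nat_le.comp
          (cnt_primrec.comp (Primrec.succ.comp (Primrec.fst.comp Primrec.snd))) Primrec.fst).decide
        (Primrec.const 1) (Primrec.const 0))).to₂)).of_eq fun n => rfl

/-! ### integer encoding facts -/

def izenc (z : ℤ) : ℕ := Equiv.intEquivNat z

theorem izenc_ofNat (n : ℕ) : izenc (Int.ofNat n) = 2 * n := rfl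

theorem izenc_negSucc (n : ℕ) : izenc (Int.negSucc n) = 2 * n + 1 := rfl

theorem izenc_abs (z : ℤ) : (izenc z + 1) / 2 = z.natAbs := by
  cases z with
  | ofNat n => rw [izenc_ofNat, show (Int.ofNat n).natAbs = n from rfl]; omega
  | negSucc n => rw [izenc_negSucc, show (Int.negSucc n).natAbs = n + 1 from rfl]; omega

theorem izenc_even_iff (z : ℤ) : izenc z % 2 = 0 ↔ 0 ≤ z := by
  cases z with
  | ofNat n =>
      rw [izenc_ofNat]
      exact ⟨fun _ => Int.ofNat_nonneg n, fun _ => by omega⟩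
  | negSucc n =>
      rw [izenc_negSucc]
      simp only [Int.negSucc_not_nonneg, iff_false]
      omega

theorem izenc_nonneg (z : ℤ) (h : 0 ≤ z) : izenc z = 2 * z.toNat := by
  obtain ⟨n, rfl⟩ := Int.eq_ofNat_of_zero_le h
  rw [show ((n : ℤ)) = Int.ofNat n from rfl, izenc_ofNat,
    show (Int.ofNat n).toNat = n from rfl]

/-! ### the ℚ encoding -/

def E0 (q : ℚ) : ℕ := Nat.pair (izenc q.num) q.den

theorem enc0 (q : ℚ) : @encode ℚ Rat.instEncodable q = E0 q := rfl

def S : Set ℕ := Set.range (@encode ℚ Rat.instEncodable)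

noncomputable local instance decS : DecidablePred (· ∈ S) :=
  Encodable.decidableRangeEncode ℚ

local instance infS : Infinite S :=
  Infinite.of_injective _ (Equiv.ofInjective _ (@encode_injective ℚ Rat.instEncodable)).injective

theorem mem_S_iff (m : ℕ) : m ∈ S ↔ χ m = true := by
  constructor
  · rintro ⟨q, rfl⟩
    rw [enc0]
    unfold E0 χ
    simp only [Nat.unpair_pair, izenc_abs, gcdF_eq, Bool.and_eq_true, decide_eq_true_eq]
    exact ⟨q.pos, q.reduced⟩
  · intro h
    unfold χ at h
    simp only [Bool.and_eq_true, decide_eq_true_eq, gcdF_eq] at h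
    set a := m.unpair.1
    set b := m.unpair.2
    have habs : (Equiv.intEquivNat.symm a).natAbs = (a + 1) / 2 := by
      rw [← izenc_abs (Equiv.intEquivNat.symm a)]
      unfold izenc
      rw [Equiv.apply_symm_apply]
    refine ⟨⟨Equiv.intEquivNat.symm a, b, by omega, by rw [habs]; exact h.2⟩, ?_⟩
    rw [enc0]
    unfold E0 izenc
    simp only [Equiv.apply_symm_apply]
    exact Nat.pair_unpair m

/-! ### counting: the n-th element of S -/

noncomputable def O (n : ℕ) : S := Nat.Subtype.ofNat S n

theorem O_lt_succ (n : ℕ) : (O n : ℕ) < (O (n + 1) : ℕ) :=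
  Nat.Subtype.lt_succ_self (O n)

theorem O_strictMono : StrictMono fun n => (O n : ℕ) :=
  strictMono_nat_of_lt_succ O_lt_succ

theorem cnt_eq_card (m : ℕ) : cnt m = ((Finset.range m).filter fun j => χ j = true).card := by
  induction m with
  | zero => rfl
  | succ m ih =>
      rw [cnt_succ, ih, Finset.range_add_one, Finset.filter_insert]
      by_cases h : χ m = true <;> simp [h, Finset.card_insert_of_notMem]

theorem cnt_mono : Monotone cnt := by
  intro a b hab
  rw [cnt_eq_card, cnt_eq_card]
  exact Finset.card_le_card (Finset.filter_subset_filter _ (by simpa using hab))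

theorem cnt_O (n : ℕ) : cnt (O n : ℕ) = n := by
  rw [cnt_eq_card]
  have : (Finset.range (O n : ℕ)).filter (fun j => χ j = true) =
      (Finset.range n).image fun k => (O k : ℕ) := by
    ext j
    simp only [Finset.mem_filter, Finset.mem_range, Finset.mem_image]
    constructor
    · rintro ⟨hj, hχ⟩
      obtain ⟨k, hk⟩ := Nat.Subtype.ofNat_surjective (⟨j, (mem_S_iff j).2 hχ⟩ : S)
      rw [show Nat.Subtype.ofNat S k = O k from rfl] at hk
      refine ⟨k, ?_, by rw [hk]⟩
      by_contra hkn
      have : (O n : ℕ) ≤ (O k : ℕ) := O_strictMono.le_iff_le.2 (by omega)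
      rw [hk] at this
      simp at this
      omega
    · rintro ⟨k, hk, rfl⟩
      exact ⟨O_strictMono (by omega), (mem_S_iff _).1 (O k).2⟩
  rw [this, Finset.card_image_of_injective _ (fun a b hab => O_strictMono.injective hab),
    Finset.card_range]

theorem χ_O (n : ℕ) : χ (O n : ℕ) = true := (mem_S_iff _).1 (O n).2

theorem pair_one_le (a : ℕ) : Nat.pair a 1 ≤ a * a + a + 1 := by
  rcases Nat.eq_zero_or_pos a with h | h
  · subst h; simp [Nat.pair]
  · have : ¬ a < 1 := by omega
    simp [Nat.pair, this]

theorem χ_pair_one (a : ℕ) : χ (Nat.pair a 1) = true := by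
  unfold χ
  simp [Nat.unpair_pair, gcdF_eq, Nat.gcd_one_right]

theorem cnt_lb (n : ℕ) : n + 2 ≤ cnt ((n + 2) ^ 2) := by
  rw [cnt_eq_card]
  have : (Finset.range (n + 2)).image (fun a => Nat.pair a 1) ⊆
      (Finset.range ((n + 2) ^ 2)).filter fun j => χ j = true := by
    intro j hj
    simp only [Finset.mem_image, Finset.mem_range] at hj
    obtain ⟨a, ha, rfl⟩ := hj
    refine Finset.mem_filter.2 ⟨Finset.mem_range.2 ?_, χ_pair_one a⟩
    have h1 := pair_one_le a
    nlinarith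
  calc n + 2 = ((Finset.range (n + 2)).image (fun a => Nat.pair a 1)).card := by
        rw [Finset.card_image_of_injective _ fun x y h => ?_, Finset.card_range]
        have := congrArg (fun t => t.unpair.1) h
        simpa using this
    _ ≤ _ := Finset.card_le_card this

theorem O_lt_bound (n : ℕ) : (O n : ℕ) < (n + 2) ^ 2 := by
  by_contra h
  have h1 : cnt ((n + 2) ^ 2) ≤ cnt (O n : ℕ) := cnt_mono (by omega)
  rw [cnt_O] at h1
  have := cnt_lb n
  omega

theorem cnt_le_iff (n m : ℕ) : cnt (m + 1) ≤ n ↔ m < (O n : ℕ) := by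
  constructor
  · intro h
    by_contra hm
    have h1 : cnt ((O n : ℕ) + 1) ≤ cnt (m + 1) := cnt_mono (by omega)
    rw [cnt_succ, cnt_O, χ_O] at h1
    simp at h1
    omega
  · intro h
    have : cnt (m + 1) ≤ cnt (O n : ℕ) := cnt_mono (by omega)
    rw [cnt_O] at this
    exact this

theorem w_eq (n : ℕ) : w n = (O n : ℕ) := by
  suffices H : ∀ M, (Nat.rec 0 (fun m acc => acc + cond (decide (cnt (m + 1) ≤ n)) 1 0) M : ℕ)
      = min M (O n : ℕ) by
    have := H ((n + 2) ^ 2)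
    unfold w
    rw [this, min_eq_right (le_of_lt (O_lt_bound n))]
  intro M
  induction M with
  | zero => simp
  | succ M ih =>
      have : (Nat.rec 0 (fun m acc => acc + cond (decide (cnt (m + 1) ≤ n)) 1 0) (M + 1) : ℕ)
          = (Nat.rec 0 (fun m acc => acc + cond (decide (cnt (m + 1) ≤ n)) 1 0) M : ℕ)
            + cond (decide (cnt (M + 1) ≤ n)) 1 0 := rfl
      rw [this, ih]
      by_cases h : cnt (M + 1) ≤ n
      · have := (cnt_le_iff n M).1 h
        simp [h]
        omega
      · have := mt (cnt_le_iff n M).2 h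
        simp [h]
        omega

/-! ### relating the Primcodable ℚ encoding -/

theorem ofNat_Q (n : ℕ) :
    (ofNat ℚ n) = (equivRangeEncode ℚ).symm (O n) := by
  refine (@ofNat_of_decode ℚ _ n _ ?_).symm
  rfl

theorem O_encode (q : ℚ) : (O (@encode ℚ Primcodable.toEncodable q) : ℕ) = E0 q := by
  have h1 : ofNat ℚ (@encode ℚ Primcodable.toEncodable q) = q := ofNat_encode q
  rw [ofNat_Q] at h1
  have h2 : O (@encode ℚ Primcodable.toEncodable q) = equivRangeEncode ℚ q := by
    have := congrArg (equivRangeEncode ℚ) h1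
    exact (Equiv.apply_symm_apply (equivRangeEncode ℚ) _).symm.trans this
  rw [h2]
  exact enc0 q

theorem w_encode (q : ℚ) : w (@encode ℚ Primcodable.toEncodable q) = E0 q := by
  rw [w_eq, O_encode]

theorem encode_eq_cnt (q : ℚ) : @encode ℚ Primcodable.toEncodable q = cnt (E0 q) := by
  conv_rhs => rw [← O_encode q, cnt_O]

theorem ofNat_cnt (q : ℚ) : ofNat ℚ (cnt (E0 q)) = q := by
  rw [← encode_eq_cnt, ofNat_encode]

/-! ### primrec accessors for ℚ -/

theorem den_primrec : Primrec (fun q : ℚ => q.den) := by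
  have : Primrec fun q : ℚ => (w (@encode ℚ Primcodable.toEncodable q)).unpair.2 :=
    Primrec.snd.comp (Primrec.unpair.comp (w_primrec.comp Primrec.encode))
  exact this.of_eq fun q => by rw [w_encode]; unfold E0; simp

theorem numcode_primrec : Primrec (fun q : ℚ => izenc q.num) := by
  have : Primrec fun q : ℚ => (w (@encode ℚ Primcodable.toEncodable q)).unpair.1 :=
    Primrec.fst.comp (Primrec.unpair.comp (w_primrec.comp Primrec.encode))
  exact this.of_eq fun q => by rw [w_encode]; unfold E0; simp



-- assume p2 contents available; for testing, import? We'll merge later. For now test standalone pieces that don't need p2.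

section Analysis

variable (f : ℕ → ℕ)

def P (n : ℕ) : ℕ := Nat.rec 0 (fun k acc => 4 * acc + f k) n

theorem P_succ (n : ℕ) : P f (n + 1) = 4 * P f n + f n := rfl

noncomputable def Sr (n : ℕ) : ℝ := ∑ k ∈ Finset.range n, (f k : ℝ) / 4 ^ k

variable (hf1 : ∀ n, f n ≤ 1)
include hf1

theorem hsummable : Summable fun n => (f n : ℝ) / 4 ^ n := by
  refine Summable.of_nonneg_of_le (fun n => by positivity) (fun n => ?_)
    (summable_geometric_of_lt_one (r := 1/4) (by norm_num) (by norm_num))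
  rw [div_pow, one_pow]
  gcongr
  exact_mod_cast hf1 n

theorem tail_nonneg (n : ℕ) : 0 ≤ ∑' k, (f (k + n) : ℝ) / 4 ^ (k + n) :=
  tsum_nonneg fun k => by positivity

theorem tail_le (n : ℕ) : ∑' k, (f (k + n) : ℝ) / 4 ^ (k + n) ≤ (4 / 3) / 4 ^ n := by
  have h1 : ∀ k, (f (k + n) : ℝ) / 4 ^ (k + n) ≤ (1/4) ^ k * (1/4) ^ n := by
    intro k
    rw [← pow_add, div_pow, one_pow]
    gcongr
    exact_mod_cast hf1 (k + n)
  have h2 : Summable fun k : ℕ => ((1:ℝ)/4) ^ k * (1/4) ^ n :=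
    (summable_geometric_of_lt_one (by norm_num) (by norm_num)).mul_right _
  have h3 : Summable fun k => (f (k + n) : ℝ) / 4 ^ (k + n) :=
    ((summable_nat_add_iff n).2 (hsummable f hf1))
  calc ∑' k, (f (k + n) : ℝ) / 4 ^ (k + n) ≤ ∑' k, ((1:ℝ)/4) ^ k * (1/4) ^ n :=
        Summable.tsum_le_tsum h1 h3 h2
    _ = (1 - 1/4)⁻¹ * (1/4) ^ n := by rw [tsum_mul_right, tsum_geometric_of_lt_one] <;> norm_num
    _ = (4/3) / 4 ^ n := by rw [div_pow]; norm_num; ring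

theorem alpha_split (n : ℕ) :
    (∑' k, (f k : ℝ) / 4 ^ k) = Sr f n + ∑' k, (f (k + n) : ℝ) / 4 ^ (k + n) :=
  (Summable.sum_add_tsum_nat_add n (hsummable f hf1)).symm

omit hf1

theorem Sr_eq (n : ℕ) : Sr f n = (4 * P f n : ℝ) / 4 ^ n := by
  induction n with
  | zero => simp [Sr, P]
  | succ n ih =>
      rw [Sr, Finset.sum_range_succ, ← Sr, ih, P_succ]
      push_cast
      field_simp
      ring

theorem Sr_succ (n : ℕ) : Sr f (n + 1) = Sr f n + (f n : ℝ) / 4 ^ n := by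
  rw [Sr, Finset.sum_range_succ, ← Sr]

end Analysis

theorem nat_le_three_pow (x : ℕ) : (x + 1 : ℕ) ≤ 3 * 4 ^ x := by
  have h := Nat.lt_pow_self (n := x) (a := 4) (by norm_num)
  nlinarith


/-! ### pow4 -/

def pow4 (n : ℕ) : ℕ := Nat.rec 1 (fun _ acc => 4 * acc) n

theorem pow4_eq (n : ℕ) : pow4 n = 4 ^ n := by
  induction n with
  | zero => rfl
  | succ n ih => show 4 * pow4 n = _; rw [ih, pow_succ]; ring

theorem pow4_primrec : Primrec pow4 :=
  Primrec.nat_rec₁ 1 ((Primrec.nat_mul.comp (Primrec.const 4) Primrec.snd).to₂)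

/-! ### building the approximating rationals -/

theorem ofNat_cnt_frac (a d : ℕ) (hd : d ≠ 0) :
    (ofNat ℚ (cnt (Nat.pair (2 * (a / Nat.gcd a d)) (d / Nat.gcd a d))) : ℚ)
      = (a : ℚ) / (d : ℚ) := by
  have hg : 0 < Nat.gcd a d := Nat.gcd_pos_of_pos_right _ (Nat.pos_of_ne_zero hd)
  have hdvd1 : Nat.gcd a d ∣ a := Nat.gcd_dvd_left a d
  have hdvd2 : Nat.gcd a d ∣ d := Nat.gcd_dvd_right a d
  have hd' : d / Nat.gcd a d ≠ 0 :=
    (Nat.div_pos (Nat.le_of_dvd (Nat.pos_of_ne_zero hd) hdvd2) hg).ne'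
  have cop : (a / Nat.gcd a d).Coprime (d / Nat.gcd a d) := Nat.coprime_div_gcd_div_gcd hg
  set q0 : ℚ := ⟨((a / Nat.gcd a d : ℕ) : ℤ), d / Nat.gcd a d, hd', by exact cop⟩ with hq0
  have hiz : izenc ((a / Nat.gcd a d : ℕ) : ℤ) = 2 * (a / Nat.gcd a d) := by
    rw [izenc_nonneg _ (by positivity)]
    omega
  have hE : E0 q0 = Nat.pair (2 * (a / Nat.gcd a d)) (d / Nat.gcd a d) := by
    show Nat.pair (izenc ((a / Nat.gcd a d : ℕ) : ℤ)) (d / Nat.gcd a d) = _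
    rw [hiz]
  rw [← hE, ofNat_cnt, hq0, Rat.mk_eq_divInt]
  have ha : ((a / Nat.gcd a d : ℕ) : ℤ) * (Nat.gcd a d : ℤ) = (a : ℤ) := by
    exact_mod_cast Nat.div_mul_cancel hdvd1
  have hd2 : ((d / Nat.gcd a d : ℕ) : ℤ) * (Nat.gcd a d : ℤ) = (d : ℤ) := by
    exact_mod_cast Nat.div_mul_cancel hdvd2
  calc Rat.divInt ((a / Nat.gcd a d : ℕ) : ℤ) ((d / Nat.gcd a d : ℕ) : ℤ)
      = Rat.divInt (((a / Nat.gcd a d : ℕ) : ℤ) * (Nat.gcd a d : ℤ))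
          (((d / Nat.gcd a d : ℕ) : ℤ) * (Nat.gcd a d : ℤ)) :=
        (Rat.divInt_mul_right (by exact_mod_cast hg.ne')).symm
    _ = Rat.divInt (a : ℤ) (d : ℤ) := by rw [ha, hd2]
    _ = (a : ℚ) / (d : ℚ) := by rw [Rat.divInt_eq_div]; push_cast; ring

section Approx

variable (f : ℕ → ℕ)

def Aq (x : ℕ) : ℚ :=
  ofNat ℚ (cnt (Nat.pair
    (2 * ((4 * P f (x + 1)) / Nat.gcd (4 * P f (x + 1)) (pow4 (x + 1))))
    ((pow4 (x + 1)) / Nat.gcd (4 * P f (x + 1)) (pow4 (x + 1)))))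

theorem Aq_val (x : ℕ) :
    Aq f x = ((4 * P f (x + 1) : ℕ) : ℚ) / ((pow4 (x + 1) : ℕ) : ℚ) :=
  ofNat_cnt_frac _ _ (by rw [pow4_eq]; positivity)

theorem Aq_real (x : ℕ) : ((Aq f x : ℚ) : ℝ) = Sr f (x + 1) := by
  rw [Aq_val, Sr_eq, pow4_eq]
  push_cast
  try ring

theorem Aq_computable (hfc : Computable f) : Computable (Aq f) := by
  have hP : Computable (P f) := by
    have hfp : Computable fun p : ℕ × (ℕ × ℕ) => f p.2.1 :=
      hfc.comp (Computable.fst.comp Computable.snd)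
    have h4 : Computable fun p : ℕ × (ℕ × ℕ) => 4 * p.2.2 :=
      (Primrec.nat_mul.comp (Primrec.const 4) (Primrec.snd.comp Primrec.snd)).to_comp
    exact Computable.nat_rec Computable.id (Computable.const 0)
      ((Primrec.nat_add.to_comp.comp h4 hfp).to₂)
  have haN : Computable fun x : ℕ => 4 * P f (x + 1) :=
    Primrec.nat_mul.to_comp.comp (Computable.const 4) (hP.comp Computable.succ)
  have hdN : Computable fun x : ℕ => pow4 (x + 1) :=
    (pow4_primrec.comp Primrec.succ).to_comp
  have hgg : Computable fun x : ℕ => Nat.gcd (4 * P f (x + 1)) (pow4 (x + 1)) := by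
    have := gcdF_primrec.to_comp.comp haN hdN
    exact this.of_eq fun x => by rw [gcdF_eq]
  have h1 : Computable fun x : ℕ =>
      2 * ((4 * P f (x + 1)) / Nat.gcd (4 * P f (x + 1)) (pow4 (x + 1))) :=
    Primrec.nat_mul.to_comp.comp (Computable.const 2)
      (Primrec.nat_div.to_comp.comp haN hgg)
  have h2 : Computable fun x : ℕ =>
      (pow4 (x + 1)) / Nat.gcd (4 * P f (x + 1)) (pow4 (x + 1)) :=
    Primrec.nat_div.to_comp.comp hdN hgg
  exact (Primrec.ofNat ℚ).to_comp.comp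
    (cnt_primrec.to_comp.comp (Primrec₂.natPair.to_comp.comp h1 h2))

theorem Aq_close (hf1 : ∀ n, f n ≤ 1) (x : ℕ) :
    |((Aq f x : ℚ) : ℝ) - ∑' n, (f n : ℝ) / 4 ^ n| ≤ 1 / ((x : ℝ) + 1) := by
  rw [Aq_real, alpha_split f hf1 (x + 1)]
  have h0 := tail_nonneg f hf1 (x + 1)
  have hle := tail_le f hf1 (x + 1)
  have habs : |Sr f (x + 1) - (Sr f (x + 1) + ∑' k, (f (k + (x + 1)) : ℝ) / 4 ^ (k + (x + 1)))|
      = ∑' k, (f (k + (x + 1)) : ℝ) / 4 ^ (k + (x + 1)) := by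
    rw [show Sr f (x + 1) - (Sr f (x + 1) + ∑' k, (f (k + (x + 1)) : ℝ) / 4 ^ (k + (x + 1)))
        = -(∑' k, (f (k + (x + 1)) : ℝ) / 4 ^ (k + (x + 1))) by ring, abs_neg,
      abs_of_nonneg h0]
  rw [habs]
  refine hle.trans ?_
  have hx : ((x : ℝ) + 1) ≤ 3 * 4 ^ x := by exact_mod_cast nat_le_three_pow x
  rw [div_le_div_iff₀ (by positivity) (by positivity), pow_succ]
  nlinarith [pow_pos (show (0:ℝ) < 4 by norm_num) x]

end Approx

/-! ### extraction of digits from a primitive recursive approximation -/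

section Extract

variable (f : ℕ → ℕ) (A : ℕ → ℚ)

def bitf (n Pn : ℕ) : ℕ :=
  cond ((decide (izenc (A (pow4 (n + 1))).num % 2 = 0)) &&
        decide ((16 * Pn + 3) * (A (pow4 (n + 1))).den ≤
          pow4 (n + 1) * (izenc (A (pow4 (n + 1))).num / 2))) 1 0

def Gf (n : ℕ) : ℕ := Nat.rec 0 (fun k acc => 4 * acc + bitf A k acc) n

theorem bitf_primrec (hA : Primrec A) : Primrec fun p : ℕ × ℕ => bitf A p.1 p.2 := by
  have hqc : Primrec fun p : ℕ × ℕ => A (pow4 (p.1 + 1)) :=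
    hA.comp (pow4_primrec.comp (Primrec.succ.comp Primrec.fst))
  have hu : Primrec fun p : ℕ × ℕ => izenc (A (pow4 (p.1 + 1))).num :=
    numcode_primrec.comp hqc
  have hv : Primrec fun p : ℕ × ℕ => (A (pow4 (p.1 + 1))).den :=
    den_primrec.comp hqc
  have b1 : Primrec fun p : ℕ × ℕ => decide (izenc (A (pow4 (p.1 + 1))).num % 2 = 0) :=
    (Primrec.eq.comp (Primrec.nat_mod.comp hu (Primrec.const 2)) (Primrec.const 0)).decide
  have b2 : Primrec fun p : ℕ × ℕ => decide ((16 * p.2 + 3) * (A (pow4 (p.1 + 1))).den ≤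
      pow4 (p.1 + 1) * (izenc (A (pow4 (p.1 + 1))).num / 2)) :=
    (Primrec.nat_le.comp
      (Primrec.nat_mul.comp
        (Primrec.nat_add.comp (Primrec.nat_mul.comp (Primrec.const 16) Primrec.snd)
          (Primrec.const 3)) hv)
      (Primrec.nat_mul.comp (pow4_primrec.comp (Primrec.succ.comp Primrec.fst))
        (Primrec.nat_div.comp hu (Primrec.const 2)))).decide
  exact Primrec.cond ((Primrec.dom_bool₂ (· && ·)).comp b1 b2)
    (Primrec.const 1) (Primrec.const 0)

theorem Gf_primrec (hA : Primrec A) : Primrec (Gf A) :=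
  Primrec.nat_rec₁ 0 ((Primrec.nat_add.comp (Primrec.nat_mul.comp (Primrec.const 4) Primrec.snd)
    (bitf_primrec A hA)).to₂)

theorem rat_mul_den (r : ℚ) : (r : ℚ) * (r.den : ℚ) = (r.num : ℚ) := by
  have hden : ((r.den : ℚ)) ≠ 0 := by
    have := r.pos
    positivity
  have h := div_mul_cancel₀ (r.num : ℚ) hden
  rwa [Rat.num_div_den] at h

theorem bitf_correct (hf1 : ∀ n, f n ≤ 1)
    (hap : ∀ x : ℕ, |(A x : ℝ) - ∑' n, (f n : ℝ) / 4 ^ n| ≤ 1 / ((x : ℝ) + 1)) (n : ℕ) :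
    bitf A n (P f n) = f n := by
  set q := A (pow4 (n + 1)) with hqdef
  set α := ∑' k, (f k : ℝ) / 4 ^ k with hα
  have hq_err : |(q : ℝ) - α| ≤ 1 / (4 : ℝ) ^ (n + 1) := by
    refine (hap (pow4 (n + 1))).trans ?_
    rw [pow4_eq]
    have h44 : ((4 ^ (n + 1) : ℕ) : ℝ) = 4 ^ (n + 1) := by push_cast; ring
    rw [h44]
    apply one_div_le_one_div_of_le (by positivity)
    linarith
  set thr : ℝ := Sr f n + 3 / 4 ^ (n + 1) with hthrdef
  have hthr : ((16 * P f n + 3 : ℕ) : ℝ) / 4 ^ (n + 1) = thr := by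
    rw [hthrdef, Sr_eq]
    push_cast
    rw [pow_succ]
    field_simp
    ring
  have hden : (0 : ℚ) < (q.den : ℚ) := by exact_mod_cast q.pos
  have hq_mul : (q : ℚ) * (q.den : ℚ) = (q.num : ℚ) := rat_mul_den q
  -- the boolean condition is equivalent to the real threshold condition
  have hcond : bitf A n (P f n) = if thr ≤ (q : ℝ) then 1 else 0 := by
    have hBI : (((decide (izenc q.num % 2 = 0)) &&
        decide ((16 * P f n + 3) * q.den ≤ pow4 (n + 1) * (izenc q.num / 2))) = true)
        ↔ (16 * (P f n : ℤ) + 3) * (q.den : ℤ) ≤ 4 ^ (n + 1) * q.num := by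
      rw [Bool.and_eq_true, decide_eq_true_eq, decide_eq_true_eq, izenc_even_iff]
      constructor
      · rintro ⟨h0, hle⟩
        have hu2 : izenc q.num / 2 = q.num.toNat := by
          rw [izenc_nonneg _ h0]; omega
        rw [hu2, pow4_eq] at hle
        have h2 := (Nat.cast_le (α := ℤ)).2 hle
        push_cast [Int.toNat_of_nonneg h0] at h2
        linarith
      · intro hCI
        have h0 : 0 ≤ q.num := by
          by_contra hneg
          push_neg at hneg
          have hdz : (0 : ℤ) < (q.den : ℤ) := by exact_mod_cast q.pos
          have hL : (0 : ℤ) < (16 * (P f n : ℤ) + 3) * (q.den : ℤ) := by positivity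
          have hR : (4 : ℤ) ^ (n + 1) * q.num < 0 :=
            mul_neg_of_pos_of_neg (by positivity) hneg
          linarith
        refine ⟨h0, ?_⟩
        have hu2 : izenc q.num / 2 = q.num.toNat := by
          rw [izenc_nonneg _ h0]; omega
        rw [hu2, pow4_eq]
        have h2 : ((16 * P f n + 3) * q.den : ℤ) ≤ ((4 ^ (n + 1) * q.num.toNat : ℕ) : ℤ) := by
          push_cast [Int.toNat_of_nonneg h0]
          linarith
        exact_mod_cast h2
    have hIQ : ((16 * (P f n : ℤ) + 3) * (q.den : ℤ) ≤ 4 ^ (n + 1) * q.num)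
        ↔ ((16 * (P f n : ℚ) + 3) / 4 ^ (n + 1) ≤ (q : ℚ)) := by
      rw [div_le_iff₀ (show (0 : ℚ) < 4 ^ (n + 1) by positivity)]
      constructor
      · intro h
        have h2 : (16 * (P f n : ℚ) + 3) * (q.den : ℚ) ≤ (4 : ℚ) ^ (n + 1) * (q.num : ℚ) := by
          exact_mod_cast h
        rw [← hq_mul] at h2
        have h3 : (4 : ℚ) ^ (n + 1) * ((q : ℚ) * (q.den : ℚ))
            = ((q : ℚ) * 4 ^ (n + 1)) * (q.den : ℚ) := by ring
        rw [h3] at h2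
        exact le_of_mul_le_mul_right h2 hden
      · intro h
        have h2 := mul_le_mul_of_nonneg_right h (le_of_lt hden)
        have h3 : ((q : ℚ) * 4 ^ (n + 1)) * (q.den : ℚ)
            = (4 : ℚ) ^ (n + 1) * ((q : ℚ) * (q.den : ℚ)) := by ring
        rw [h3, hq_mul] at h2
        exact_mod_cast h2
    have hQR : ((16 * (P f n : ℚ) + 3) / 4 ^ (n + 1) ≤ (q : ℚ)) ↔ (thr ≤ (q : ℝ)) := by
      rw [← hthr, ← Rat.cast_le (K := ℝ)]
      have hc : (((16 * (P f n : ℚ) + 3) / 4 ^ (n + 1) : ℚ) : ℝ)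
          = ((16 * P f n + 3 : ℕ) : ℝ) / 4 ^ (n + 1) := by push_cast; ring
      rw [hc]
    have hfinal := hBI.trans (hIQ.trans hQR)
    show (cond _ 1 0 : ℕ) = _
    by_cases h : thr ≤ (q : ℝ)
    · rw [if_pos h, hfinal.2 h]
      rfl
    · rw [if_neg h]
      have hb : ((decide (izenc q.num % 2 = 0)) &&
          decide ((16 * P f n + 3) * q.den ≤ pow4 (n + 1) * (izenc q.num / 2))) = false := by
        by_contra hbt
        exact h (hfinal.1 (by simpa using hbt))
      rw [hb]
      rfl
  -- now use the approximation bounds to determine the digit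
  have hsplit := alpha_split f hf1 (n + 1)
  have h0 := tail_nonneg f hf1 (n + 1)
  have hle := tail_le f hf1 (n + 1)
  have hSr := Sr_succ f n
  have habs := abs_le.1 hq_err
  have h41 : (4 : ℝ) ^ (n + 1) = 4 * 4 ^ n := by rw [pow_succ]; ring
  have hv : (0 : ℝ) < 1 / 4 ^ (n + 1) := by positivity
  have e2 : (1 : ℝ) / 4 ^ n = 4 * (1 / 4 ^ (n + 1)) := by
    rw [h41]
    field_simp
  have hthr' : thr = Sr f n + 3 * (1 / 4 ^ (n + 1)) := by rw [hthrdef]; ring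
  have hle' : (∑' k, (f (k + (n + 1)) : ℝ) / 4 ^ (k + (n + 1))) ≤ (4 / 3) * (1 / 4 ^ (n + 1)) :=
    hle.trans (le_of_eq (by ring))
  have hfn : f n = 0 ∨ f n = 1 := by have := hf1 n; omega
  rw [hcond]
  rcases hfn with h | h
  · rw [if_neg, h]
    intro hthr_le
    have h1 : α ≤ Sr f n + (4 / 3) * (1 / 4 ^ (n + 1)) := by
      rw [hα, hsplit, hSr, h]
      push_cast
      rw [zero_div]
      linarith
    have h2 : (q : ℝ) ≤ α + 1 / 4 ^ (n + 1) := by linarith [habs.2]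
    rw [hthr'] at hthr_le
    linarith
  · rw [if_pos, h]
    have hα_ge : Sr f n + 4 * (1 / 4 ^ (n + 1)) ≤ α := by
      rw [hα, hsplit, hSr, h]
      push_cast
      rw [e2]
      linarith
    have hq_ge : α - 1 / 4 ^ (n + 1) ≤ (q : ℝ) := by linarith [habs.1]
    rw [hthr']
    linarith

theorem Gf_eq (hf1 : ∀ n, f n ≤ 1)
    (hap : ∀ x : ℕ, |(A x : ℝ) - ∑' n, (f n : ℝ) / 4 ^ n| ≤ 1 / ((x : ℝ) + 1)) :
    ∀ n, Gf A n = P f n := by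
  intro n
  induction n with
  | zero => rfl
  | succ n ih =>
      show 4 * Gf A n + bitf A n (Gf A n) = _
      rw [ih, bitf_correct f A hf1 hap n, P_succ]

theorem extraction (hf1 : ∀ n, f n ≤ 1) (hA : Primrec A)
    (hap : ∀ x : ℕ, |(A x : ℝ) - ∑' n, (f n : ℝ) / 4 ^ n| ≤ 1 / ((x : ℝ) + 1)) :
    Primrec f := by
  have hfeq : f = fun n => bitf A n (Gf A n) := by
    funext n
    rw [Gf_eq f A hf1 hap n, bitf_correct f A hf1 hap n]
  rw [hfeq]
  exact (bitf_primrec A hA).comp (Primrec.id.pair (Gf_primrec A hA))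

end Extract

end NPA


theorem exists_computableReal_no_primrec_approx :
    (∃ α : ℝ, IsComputableReal α ∧
      ¬ ∃ A : ℕ → ℚ, Primrec A ∧ ∀ x : ℕ, |(A x : ℝ) - α| ≤ 1 / ((x : ℝ) + 1)) ∧
    (∀ f : ℕ → ℕ, (∀ n, f n ≤ 1) → Computable f → ¬ Primrec f →
      IsComputableReal (∑' n : ℕ, (f n : ℝ) / 4 ^ n) ∧
      ¬ ∃ A : ℕ → ℚ, Primrec A ∧
        ∀ x : ℕ, |(A x : ℝ) - ∑' n : ℕ, (f n : ℝ) / 4 ^ n| ≤ 1 / ((x : ℝ) + 1)) := by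
  have main : ∀ f : ℕ → ℕ, (∀ n, f n ≤ 1) → Computable f → ¬ Primrec f →
      IsComputableReal (∑' n : ℕ, (f n : ℝ) / 4 ^ n) ∧
      ¬ ∃ A : ℕ → ℚ, Primrec A ∧
        ∀ x : ℕ, |(A x : ℝ) - ∑' n : ℕ, (f n : ℝ) / 4 ^ n| ≤ 1 / ((x : ℝ) + 1) := by
    intro f hf1 hfc hfnp
    constructor
    · exact ⟨NPA.Aq f, NPA.Aq_computable f hfc, fun x => NPA.Aq_close f hf1 x⟩
    · rintro ⟨A, hA, hap⟩
      exact hfnp (NPA.extraction f A hf1 hA hap)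
  refine ⟨?_, main⟩
  obtain ⟨h1, h2⟩ := main NPA.g NPA.g_le_one NPA.g_computable NPA.g_not_primrec
  exact ⟨∑' n : ℕ, (NPA.g n : ℝ) / 4 ^ n, h1, h2⟩
end
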